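/- arXiv:1309.1596 — 7 statements merged into one kernel-verified Lean document; each statement's English description precedes it below -/
import Mathlib

section
/- Let P_{A,E} be a joint sub-distribution on 𝒜 × ℰ with P_E(e) > 0 for every e ∈ ℰ, and let s ∈ (−1, ∞) with s ≠ 0. Then H^↑_{1+s}(A|E|P_{A,E}) = −((1+s)/s) · log ∑_{e∈ℰ} (∑_{a∈𝒜} P_{A,E}(a,e)^{1+s})^{1/(1+s)}, and the supremum defining H^↑_{1+s}(A|E|P_{A,E}) is attained at the normalized distribution Q_E(e) = (∑_a P_{A,E}(a,e)^{1+s})^{1/(1+s)} / ∑_{e'} (∑_a P_{A,E}(a,e')^{1+s})^{1/(1+s)}. -/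
open Real Finset Filter

attribute [local instance] Classical.propDecidable

namespace Hayashi

def IsSubDist {S : Type*} [Fintype S] (P : S → ℝ) : Prop :=
  (∀ x, 0 ≤ P x) ∧ ∑ x, P x ≤ 1

def IsDist {S : Type*} [Fintype S] (P : S → ℝ) : Prop :=
  (∀ x, 0 ≤ P x) ∧ ∑ x, P x = 1

variable {A E : Type*} [Fintype A] [Fintype E]

noncomputable def margE (P : A × E → ℝ) (e : E) : ℝ := ∑ a, P (a, e)

noncomputable def margNorm (P : A × E → ℝ) (e : E) : ℝ := margE P e / ∑ e', margE P e'

noncomputable def l1 (P P' : A × E → ℝ) : ℝ := ∑ a, ∑ e, |P (a, e) - P' (a, e)|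

noncomputable def eta (x y : ℝ) : ℝ := -x * Real.log x + x * y

noncomputable def condRenyi (P : A × E → ℝ) (Q : E → ℝ) (s : ℝ) : ℝ :=
  (-1 / s) * Real.log (∑ a, ∑ e, P (a, e) ^ (1 + s) * Q e ^ (-s))

noncomputable def condRenyiUp (P : A × E → ℝ) (s : ℝ) : ℝ :=
  sSup {x | ∃ Q : E → ℝ, IsDist Q ∧ (∀ e, 0 < Q e) ∧ x = condRenyi P Q s}

noncomputable def condRenyiDown (P : A × E → ℝ) (s : ℝ) : ℝ :=
  condRenyi P (margNorm P) s

noncomputable def condEnt (P : A × E → ℝ) : ℝ :=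
  -∑ a, ∑ e, P (a, e) * Real.log (P (a, e) / margE P e)

noncomputable def H2cond (P : A × E → ℝ) (Q : E → ℝ) : ℝ :=
  -Real.log (∑ a, ∑ e, P (a, e) ^ 2 / Q e)

noncomputable def d2cond (P : A × E → ℝ) (Q : E → ℝ) : ℝ :=
  ∑ a, ∑ e, (P (a, e) - margE P e / (Fintype.card A : ℝ)) ^ 2 / Q e

noncomputable def d1' (P : A × E → ℝ) : ℝ :=
  ∑ a, ∑ e, |P (a, e) - margE P e / (Fintype.card A : ℝ)|

noncomputable def Iprime (P : A × E → ℝ) : ℝ :=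
  ∑ a, ∑ e, P (a, e) * Real.log (P (a, e) * (Fintype.card A : ℝ) / margE P e)

noncomputable def Hmin (P : A × E → ℝ) (Q : E → ℝ) : ℝ :=
  -Real.log (sSup {r | ∃ a e, 0 < Q e ∧ r = P (a, e) / Q e})

noncomputable def D2div {E : Type*} [Fintype E] (P Q : E → ℝ) : ℝ :=
  Real.log (∑ e, P e ^ 2 / Q e)

noncomputable def pushHash {B : Type*} (f : A → B) (P : A × E → ℝ) : B × E → ℝ :=
  fun be => ∑ a, (if f a = be.1 then P (a, be.2) else 0)

noncomputable def Delta_d2 (M ε : ℝ) (P : A × E → ℝ) : ℝ :=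
  sInf {x | ∃ (Q : E → ℝ) (P' : A × E → ℝ), IsDist Q ∧ (∀ e, 0 < Q e) ∧ IsSubDist P' ∧
    x = 2 * l1 P P' + Real.sqrt ε * Real.sqrt M * Real.exp (-H2cond P' Q / 2)}

noncomputable def Delta_I2 (M ε : ℝ) (P : A × E → ℝ) : ℝ :=
  sInf {x | ∃ P' : A × E → ℝ, IsSubDist P' ∧ (∀ e, margE P' e ≤ margE P e) ∧
    x = eta (l1 P P') (Real.log M) + ε * M * Real.exp (-H2cond P' (margE P))}

noncomputable def Delta_dmin (M ε : ℝ) (P : A × E → ℝ) : ℝ :=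
  sInf {x | ∃ (Q : E → ℝ) (P' : A × E → ℝ), IsDist Q ∧ (∀ e, 0 < Q e) ∧ IsSubDist P' ∧
    x = 2 * l1 P P' + Real.sqrt ε * Real.sqrt M * Real.exp (-Hmin P' Q / 2)}

noncomputable def Delta_Imin (M ε : ℝ) (P : A × E → ℝ) : ℝ :=
  sInf {x | ∃ P' : A × E → ℝ, IsSubDist P' ∧ (∀ e, margE P' e ≤ margE P e) ∧
    x = eta (l1 P P') (Real.log M) + ε * M * Real.exp (-Hmin P' (margE P))}

noncomputable def DeltaBar_Imin (M ε : ℝ) (P : A × E → ℝ) : ℝ :=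
  sInf {x | ∃ P' : A × E → ℝ, IsSubDist P' ∧ (∀ e, margE P' e ≤ margE P e) ∧
    x = eta (l1 P P') (Real.log M) + Real.log (1 + ε * M * Real.exp (-Hmin P' (margE P)))}

noncomputable def Pn (P : A × E → ℝ) (n : ℕ) : (Fin n → A) × (Fin n → E) → ℝ :=
  fun ae => ∏ i, P (ae.1 i, ae.2 i)


/-- Lemma `cor1` of the paper: closed form for `H^↑_{1+s}` and attainment of the
supremum at the explicit distribution `Q_E`. -/
theorem statement0 {A E : Type*} [Fintype A] [Fintype E] [Nonempty A] [Nonempty E]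
    (P : A × E → ℝ) (hP : IsSubDist P) (hPE : ∀ e, 0 < margE P e)
    (s : ℝ) (hs : -1 < s) (hs0 : s ≠ 0) :
    condRenyiUp P s =
      -((1 + s) / s) *
        Real.log (∑ e, (∑ a, P (a, e) ^ (1 + s)) ^ (1 / (1 + s))) ∧
    IsDist (fun e : E => (∑ a, P (a, e) ^ (1 + s)) ^ (1 / (1 + s)) /
        ∑ e', (∑ a, P (a, e') ^ (1 + s)) ^ (1 / (1 + s))) ∧
    (∀ e : E, 0 < (∑ a, P (a, e) ^ (1 + s)) ^ (1 / (1 + s)) /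
        ∑ e', (∑ a, P (a, e') ^ (1 + s)) ^ (1 / (1 + s))) ∧
    condRenyi P
        (fun e : E => (∑ a, P (a, e) ^ (1 + s)) ^ (1 / (1 + s)) /
          ∑ e', (∑ a, P (a, e') ^ (1 + s)) ^ (1 / (1 + s))) s =
      condRenyiUp P s := by
  have hs1 : (0:ℝ) < 1 + s := by linarith
  have hs1' : (1:ℝ) + s ≠ 0 := ne_of_gt hs1
  set f : E → ℝ := fun e => ∑ a, P (a, e) ^ (1 + s) with hf_def
  have hfpos : ∀ e, 0 < f e := by
    intro e
    obtain ⟨a, ha⟩ : ∃ a : A, 0 < P (a, e) := by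
      by_contra hcon
      push_neg at hcon
      have h1 : ∑ a, P (a, e) ≤ 0 := Finset.sum_nonpos fun a _ => hcon a
      have h2 := hPE e
      unfold margE at h2
      linarith
    exact Finset.sum_pos' (fun a _ => Real.rpow_nonneg (hP.1 _) _)
      ⟨a, Finset.mem_univ a, Real.rpow_pos_of_pos ha _⟩
  set g : E → ℝ := fun e => f e ^ (1 / (1 + s)) with hg_def
  have hgpos : ∀ e, 0 < g e := fun e => Real.rpow_pos_of_pos (hfpos e) _
  set T : ℝ := ∑ e, g e with hT_def
  have hTpos : 0 < T := Finset.sum_pos (fun e _ => hgpos e) Finset.univ_nonempty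
  have hgf : ∀ e, g e ^ (1 + s) = f e := by
    intro e
    rw [hg_def]
    rw [← Real.rpow_mul (hfpos e).le, one_div_mul_cancel hs1', Real.rpow_one]
  -- rewrite condRenyi as a single sum over e
  have hcr : ∀ Q : E → ℝ, condRenyi P Q s = (-1/s) * Real.log (∑ e, f e * Q e ^ (-s)) := by
    intro Q
    unfold condRenyi
    congr 1
    have hswap : (∑ a : A, ∑ e : E, P (a, e) ^ (1 + s) * Q e ^ (-s)) =
        ∑ e : E, ∑ a : A, P (a, e) ^ (1 + s) * Q e ^ (-s) := Finset.sum_comm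
    rw [hswap]
    congr 1
    exact Finset.sum_congr rfl fun e _ => by rw [← Finset.sum_mul]
  set Qs : E → ℝ := fun e => g e / T with hQs_def
  have hQspos : ∀ e, 0 < Qs e := fun e => div_pos (hgpos e) hTpos
  have hQsdist : IsDist Qs := by
    refine ⟨fun e => (hQspos e).le, ?_⟩
    rw [hQs_def]
    rw [← Finset.sum_div, ← hT_def, div_self hTpos.ne']
  have hSQs : ∑ e, f e * Qs e ^ (-s) = T ^ (1 + s) := by
    have hterm : ∀ e, f e * Qs e ^ (-s) = g e * T ^ s := by
      intro e
      have h1 : Qs e ^ (-s) = g e ^ (-s) * T ^ s := by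
        rw [hQs_def]
        rw [Real.div_rpow (hgpos e).le hTpos.le]
        rw [Real.rpow_neg hTpos.le s, div_eq_mul_inv, inv_inv]
      rw [h1, ← hgf e, ← mul_assoc, ← Real.rpow_add (hgpos e)]
      have : 1 + s + -s = 1 := by ring
      rw [this, Real.rpow_one]
    rw [Finset.sum_congr rfl fun e _ => hterm e, ← Finset.sum_mul, ← hT_def,
      Real.rpow_add hTpos, Real.rpow_one]
  have hVQs : condRenyi P Qs s = -((1 + s) / s) * Real.log T := by
    rw [hcr, hSQs, Real.log_rpow hTpos]
    ring
  -- upper bound for arbitrary Q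
  have hub : ∀ Q : E → ℝ, IsDist Q → (∀ e, 0 < Q e) →
      condRenyi P Q s ≤ -((1 + s) / s) * Real.log T := by
    intro Q hQ hQpos
    have hSpos : 0 < ∑ e, f e * Q e ^ (-s) :=
      Finset.sum_pos (fun e _ => mul_pos (hfpos e) (Real.rpow_pos_of_pos (hQpos e) _))
        Finset.univ_nonempty
    rw [hcr]
    rcases lt_or_gt_of_ne hs0 with hneg | hpos
    · -- s < 0 : show S ≤ T^(1+s), and -1/s > 0
      have hconj : Real.HolderConjugate (1/(1+s)) (-1/s) := by
        rw [Real.holderConjugate_iff]; constructor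
        · rw [lt_div_iff₀ hs1, one_mul]
          linarith
        · field_simp; ring
      have hH := Real.inner_le_Lp_mul_Lq_of_nonneg (s := Finset.univ) hconj
        (f := f) (g := fun e => Q e ^ (-s))
        (fun e _ => (hfpos e).le) (fun e _ => (Real.rpow_pos_of_pos (hQpos e) _).le)
      have h1 : ∀ e, f e ^ (1/(1+s)) = g e := fun e => rfl
      have h2 : ∀ e, (Q e ^ (-s)) ^ (-1/s) = Q e := by
        intro e
        rw [← Real.rpow_mul (hQpos e).le]
        have : -s * (-1/s) = 1 := by field_simp
        rw [this, Real.rpow_one]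
      rw [Finset.sum_congr rfl (fun e _ => h1 e),
        Finset.sum_congr rfl (fun e _ => h2 e), ← hT_def, hQ.2, one_div_one_div] at hH
      have hone : (1:ℝ) ^ (1/(-1/s)) = 1 := Real.one_rpow _
      rw [hone, mul_one] at hH
      have hlog : Real.log (∑ e, f e * Q e ^ (-s)) ≤ (1 + s) * Real.log T := by
        calc Real.log (∑ e, f e * Q e ^ (-s)) ≤ Real.log (T ^ (1+s)) :=
              Real.log_le_log hSpos hH
          _ = (1 + s) * Real.log T := Real.log_rpow hTpos _
      have h3 : (0:ℝ) ≤ -1/s := by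
        rw [div_nonneg_iff]; right; constructor <;> linarith
      calc (-1/s) * Real.log (∑ e, f e * Q e ^ (-s)) ≤ (-1/s) * ((1+s) * Real.log T) :=
            mul_le_mul_of_nonneg_left hlog h3
        _ = -((1 + s) / s) * Real.log T := by ring
    · -- s > 0
      have hconj : Real.HolderConjugate (1+s) ((1+s)/s) := by
        rw [Real.holderConjugate_iff]; constructor
        · linarith
        · field_simp
      have hH := Real.inner_le_Lp_mul_Lq_of_nonneg (s := Finset.univ) hconj
        (f := fun e => (f e * Q e ^ (-s)) ^ (1/(1+s))) (g := fun e => Q e ^ (s/(1+s)))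
        (fun e _ => Real.rpow_nonneg (mul_nonneg (hfpos e).le
          (Real.rpow_nonneg (hQpos e).le _)) _)
        (fun e _ => Real.rpow_nonneg (hQpos e).le _)
      have h1 : ∀ e, (f e * Q e ^ (-s)) ^ (1/(1+s)) * Q e ^ (s/(1+s)) = g e := by
        intro e
        rw [Real.mul_rpow (hfpos e).le (Real.rpow_nonneg (hQpos e).le _),
          ← Real.rpow_mul (hQpos e).le, mul_assoc, ← Real.rpow_add (hQpos e)]
        have he : -s * (1/(1+s)) + s/(1+s) = 0 := by field_simp; ring
        rw [he, Real.rpow_zero, mul_one]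
      have h2 : ∀ e, ((f e * Q e ^ (-s)) ^ (1/(1+s))) ^ (1+s) = f e * Q e ^ (-s) := by
        intro e
        rw [← Real.rpow_mul (mul_nonneg (hfpos e).le (Real.rpow_nonneg (hQpos e).le _)),
          one_div_mul_cancel hs1', Real.rpow_one]
      have h3 : ∀ e, (Q e ^ (s/(1+s))) ^ ((1+s)/s) = Q e := by
        intro e
        rw [← Real.rpow_mul (hQpos e).le]
        have : s/(1+s) * ((1+s)/s) = 1 := by field_simp
        rw [this, Real.rpow_one]
      rw [Finset.sum_congr rfl (fun e _ => h1 e),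
        Finset.sum_congr rfl (fun e _ => h2 e),
        Finset.sum_congr rfl (fun e _ => h3 e), ← hT_def, hQ.2, Real.one_rpow, mul_one] at hH
      -- hH : T ≤ S ^ (1/(1+s))
      have hle : T ^ (1+s) ≤ ∑ e, f e * Q e ^ (-s) := by
        have := Real.rpow_le_rpow hTpos.le hH hs1.le
        rwa [← Real.rpow_mul hSpos.le, one_div_mul_cancel hs1', Real.rpow_one] at this
      have hlog : (1 + s) * Real.log T ≤ Real.log (∑ e, f e * Q e ^ (-s)) := by
        calc (1 + s) * Real.log T = Real.log (T ^ (1+s)) := (Real.log_rpow hTpos _).symm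
          _ ≤ Real.log (∑ e, f e * Q e ^ (-s)) :=
              Real.log_le_log (Real.rpow_pos_of_pos hTpos _) hle
      have h4 : (-1/s) ≤ 0 := by
        apply div_nonpos_of_nonpos_of_nonneg <;> linarith
      calc (-1/s) * Real.log (∑ e, f e * Q e ^ (-s)) ≤ (-1/s) * ((1+s) * Real.log T) :=
            mul_le_mul_of_nonpos_left hlog h4
        _ = -((1 + s) / s) * Real.log T := by ring
  have hgreat : IsGreatest {x | ∃ Q : E → ℝ, IsDist Q ∧ (∀ e, 0 < Q e) ∧ x = condRenyi P Q s}
      (-((1 + s) / s) * Real.log T) := by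
    constructor
    · exact ⟨Qs, hQsdist, hQspos, hVQs.symm⟩
    · rintro x ⟨Q, hQ1, hQ2, rfl⟩
      exact hub Q hQ1 hQ2
  have hsup : condRenyiUp P s = -((1 + s) / s) * Real.log T := hgreat.csSup_eq
  exact ⟨hsup, hQsdist, hQspos, by rw [hVQs, hsup]⟩
end Hayashi
end

section
/- Let q = p^k be a power of a prime p, let ℰ be a finite nonempty set, let P_{A,E} be a joint sub-distribution on 𝔽_q^n × ℰ, let Q_E be a normalized distribution on ℰ with full support, and let (W_x)_{x∈𝒳} be a δ-biased ensemble of random variables on 𝔽_q^n. Then E_X d₂(A|E|P_{A,E} ∗ P_{W_X}‖Q_E) ≤ δ² · d₂(A|E|P_{A,E}‖Q_E) ≤ δ² · e^{−H₂(A|E|P_{A,E}‖Q_E)}, where (P_{A,E} ∗ P_{W_x})(a,e) := ∑_{w∈𝔽_q^n} P_{W_x}(w)·P_{A,E}(a−w, e). -/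
open Real Finset Filter

attribute [local instance] Classical.propDecidable

namespace Hayashi

variable {A E : Type*} [Fintype A] [Fintype E]

noncomputable def omg (p : ℕ) (t : ZMod p) : ℂ :=
  Complex.exp (2 * Real.pi * Complex.I * (t.val : ℂ) / (p : ℂ))

noncomputable def unifOn {n : ℕ} {F : Type*} [Field F] [Fintype F]
    (C : Submodule F (Fin n → F)) : (Fin n → F) → ℝ :=
  fun w => if w ∈ C then (Nat.card C : ℝ)⁻¹ else 0

section FourierAux
set_option linter.unusedSectionVars false
set_option linter.unusedVariables false
variable {p : ℕ} [hpp : Fact p.Prime]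

lemma omg_eq_pow (t : ZMod p) :
    omg p t = Complex.exp (2 * Real.pi * Complex.I / p) ^ t.val := by
  rw [omg, ← Complex.exp_nat_mul]
  ring_nf

lemma omg_add (s t : ZMod p) : omg p (s + t) = omg p s * omg p t := by
  have hp : p ≠ 0 := hpp.out.pos.ne'
  have hζ : Complex.exp (2 * Real.pi * Complex.I / p) ^ p = 1 :=
    (Complex.isPrimitiveRoot_exp p hp).pow_eq_one
  have : NeZero p := ⟨hp⟩
  rw [omg_eq_pow, omg_eq_pow, omg_eq_pow, ← pow_add, ZMod.val_add]
  conv_rhs => rw [← Nat.div_add_mod (s.val + t.val) p]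
  rw [pow_add, pow_mul, hζ, one_pow, one_mul]

lemma omg_zero : omg p 0 = 1 := by
  have : NeZero p := ⟨hpp.out.pos.ne'⟩
  rw [omg_eq_pow, ZMod.val_zero, pow_zero]

lemma omg_ne_one {t : ZMod p} (ht : t ≠ 0) : omg p t ≠ 1 := by
  have hp : p ≠ 0 := hpp.out.pos.ne'
  have : NeZero p := ⟨hp⟩
  rw [omg_eq_pow]
  intro h
  have hdvd := ((Complex.isPrimitiveRoot_exp p hp).pow_eq_one_iff_dvd t.val).mp h
  have h0 : t.val = 0 := Nat.eq_zero_of_dvd_of_lt hdvd (ZMod.val_lt t)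
  exact ht (by rwa [ZMod.val_eq_zero] at h0)

lemma omg_ne_zero (t : ZMod p) : omg p t ≠ 0 := Complex.exp_ne_zero _

lemma omg_mul_omg_neg (t : ZMod p) : omg p t * omg p (-t) = 1 := by
  rw [← omg_add, add_neg_cancel, omg_zero]

lemma omg_conj (t : ZMod p) : (starRingEnd ℂ) (omg p t) = omg p (-t) := by
  have h1 : (starRingEnd ℂ) (omg p t) = (omg p t)⁻¹ := by
    rw [omg, ← Complex.exp_conj]
    rw [← Complex.exp_neg]
    congr 1
    simp only [map_div₀, map_mul, Complex.conj_I, Complex.conj_ofReal, map_natCast, map_ofNat]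
    ring
  rw [h1]
  exact inv_eq_of_mul_eq_one_right (omg_mul_omg_neg t)

variable {G : Type*} [AddCommGroup G] [Fintype G] [DecidableEq G]
variable {dot : G → G → ZMod p}

lemma dot_zero (hd2 : ∀ y a b, dot y (a + b) = dot y a + dot y b) (y : G) :
    dot y (0 : G) = 0 := by
  have := hd2 y 0 0
  rw [add_zero] at this
  exact (left_eq_add.mp this)

lemma dot_sub (hd2 : ∀ y a b, dot y (a + b) = dot y a + dot y b) (y a b : G) :
    dot y (a - b) = dot y a - dot y b := by
  have := hd2 y (a - b) b
  rw [sub_add_cancel] at this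
  rw [this]; ring

lemma sum_omg_eq_zero (hd1 : ∀ x y z, dot (x + y) z = dot x z + dot y z)
    {c : G} (hc : ∃ y, dot y c ≠ 0) :
    ∑ y : G, omg p (dot y c) = 0 := by
  obtain ⟨y₀, hy₀⟩ := hc
  have h1 : ∑ y : G, omg p (dot (y + y₀) c) = ∑ y : G, omg p (dot y c) :=
    Fintype.sum_equiv (Equiv.addRight y₀) _ _ (fun y => rfl)
  have h2 : ∑ y : G, omg p (dot (y + y₀) c)
      = omg p (dot y₀ c) * ∑ y : G, omg p (dot y c) := by
    rw [Finset.mul_sum]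
    refine Finset.sum_congr rfl fun y _ => ?_
    rw [hd1, omg_add]; ring
  have h3 : (omg p (dot y₀ c) - 1) * ∑ y : G, omg p (dot y c) = 0 := by
    rw [sub_mul, one_mul, ← h2, h1, sub_self]
  rcases mul_eq_zero.mp h3 with h | h
  · exact absurd (sub_eq_zero.mp h) (omg_ne_one hy₀)
  · exact h

lemma orth (hd1 : ∀ x y z, dot (x + y) z = dot x z + dot y z)
    (hd2 : ∀ y a b, dot y (a + b) = dot y a + dot y b)
    (hnd : ∀ c : G, c ≠ 0 → ∃ y, dot y c ≠ 0) (a b : G) :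
    ∑ y : G, omg p (dot y a) * omg p (- dot y b)
      = if a = b then (Fintype.card G : ℂ) else 0 := by
  have hterm : ∀ y : G, omg p (dot y a) * omg p (- dot y b) = omg p (dot y (a - b)) := by
    intro y
    rw [← omg_add, dot_sub hd2, sub_eq_add_neg]
  simp only [hterm]
  by_cases h : a = b
  · subst h
    simp [sub_self, dot_zero hd2, omg_zero]
  · rw [if_neg h]
    exact sum_omg_eq_zero hd1 (hnd (a - b) (sub_ne_zero.mpr h))

lemma conj_fhat (f : G → ℝ) (y : G) :
    (starRingEnd ℂ) (∑ a, (f a : ℂ) * omg p (dot y a))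
      = ∑ a, (f a : ℂ) * omg p (- dot y a) := by
  rw [map_sum]
  refine Finset.sum_congr rfl fun a _ => ?_
  rw [map_mul, Complex.conj_ofReal, omg_conj]

lemma parseval (hd1 : ∀ x y z, dot (x + y) z = dot x z + dot y z)
    (hd2 : ∀ y a b, dot y (a + b) = dot y a + dot y b)
    (hnd : ∀ c : G, c ≠ 0 → ∃ y, dot y c ≠ 0) (f : G → ℝ) :
    ∑ y : G, Complex.normSq (∑ a, (f a : ℂ) * omg p (dot y a))
      = (Fintype.card G : ℝ) * ∑ a, (f a) ^ 2 := by
  have key : (∑ y : G, (Complex.normSq (∑ a, (f a : ℂ) * omg p (dot y a)) : ℂ))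
      = (Fintype.card G : ℂ) * ∑ a, ((f a : ℂ)) ^ 2 := by
    have step1 : ∀ y : G, (Complex.normSq (∑ a, (f a : ℂ) * omg p (dot y a)) : ℂ)
        = ∑ a, ∑ b, (f a : ℂ) * (f b : ℂ) * (omg p (dot y a) * omg p (- dot y b)) := by
      intro y
      rw [← Complex.mul_conj, conj_fhat, Finset.sum_mul_sum]
      refine Finset.sum_congr rfl fun a _ => Finset.sum_congr rfl fun b _ => by ring
    simp only [step1]
    rw [Finset.sum_comm]
    have step2 : ∀ a : G, (∑ y : G, ∑ b, (f a : ℂ) * (f b : ℂ) * (omg p (dot y a) * omg p (- dot y b)))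
        = ∑ b, (f a : ℂ) * (f b : ℂ) * (∑ y : G, omg p (dot y a) * omg p (- dot y b)) := by
      intro a
      rw [Finset.sum_comm]
      exact Finset.sum_congr rfl fun b _ => by rw [Finset.mul_sum]
    simp only [step2, orth hd1 hd2 hnd]
    rw [Finset.mul_sum]
    refine Finset.sum_congr rfl fun a _ => ?_
    rw [Finset.sum_eq_single a]
    · rw [if_pos rfl]; ring
    · intro b _ hb; rw [if_neg (Ne.symm hb), mul_zero]
    · intro h; exact absurd (Finset.mem_univ a) h
  exact_mod_cast key

lemma conv_hat (hd2 : ∀ y a b, dot y (a + b) = dot y a + dot y b)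
    (W f : G → ℝ) (y : G) :
    (∑ a, ((∑ w, W w * f (a - w) : ℝ) : ℂ) * omg p (dot y a))
      = (∑ w, (W w : ℂ) * omg p (dot y w)) * (∑ a, (f a : ℂ) * omg p (dot y a)) := by
  have step1 : ∀ w : G, (∑ a : G, (f (a - w) : ℂ) * omg p (dot y a))
      = omg p (dot y w) * ∑ b : G, (f b : ℂ) * omg p (dot y b) := by
    intro w
    rw [Finset.mul_sum]
    refine Fintype.sum_equiv (Equiv.subRight w) _ _ fun a => ?_
    simp only [Equiv.subRight_apply]
    have : dot y a = dot y (a - w) + dot y w := by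
      rw [← hd2, sub_add_cancel]
    rw [this, omg_add]; ring
  calc (∑ a, ((∑ w, W w * f (a - w) : ℝ) : ℂ) * omg p (dot y a))
      = ∑ a : G, ∑ w : G, (W w : ℂ) * ((f (a - w) : ℂ) * omg p (dot y a)) := by
        refine Finset.sum_congr rfl fun a _ => ?_
        push_cast
        rw [Finset.sum_mul]
        exact Finset.sum_congr rfl fun w _ => by ring
    _ = ∑ w : G, (W w : ℂ) * ∑ a : G, (f (a - w) : ℂ) * omg p (dot y a) := by
        rw [Finset.sum_comm]
        exact Finset.sum_congr rfl fun w _ => by rw [Finset.mul_sum]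
    _ = ∑ w : G, (W w : ℂ) * (omg p (dot y w) * ∑ b : G, (f b : ℂ) * omg p (dot y b)) := by
        simp only [step1]
    _ = _ := by
        rw [Finset.sum_mul]
        exact Finset.sum_congr rfl fun w _ => by ring

lemma avg_bound (hd1 : ∀ x y z, dot (x + y) z = dot x z + dot y z)
    (hd2 : ∀ y a b, dot y (a + b) = dot y a + dot y b)
    (hnd : ∀ c : G, c ≠ 0 → ∃ y, dot y c ≠ 0)
    {X : Type*} [Fintype X] (μ : X → ℝ) (hμ : ∀ x, 0 ≤ μ x)
    (W : X → G → ℝ) (δ : ℝ)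
    (hbias : ∀ y : G, y ≠ 0 →
      ∑ x, μ x * Complex.normSq (∑ w, (W x w : ℂ) * omg p (dot y w)) ≤ δ ^ 2)
    (f : G → ℝ) (hf0 : ∑ a, f a = 0) :
    ∑ x, μ x * ∑ a, (∑ w, W x w * f (a - w)) ^ 2 ≤ δ ^ 2 * ∑ a, (f a) ^ 2 := by
  have hK : (0 : ℝ) < (Fintype.card G : ℝ) := by positivity
  rw [← mul_le_mul_iff_right₀ hK]
  have hδ : (0:ℝ) ≤ δ ^ 2 := sq_nonneg δ
  calc (Fintype.card G : ℝ) * ∑ x, μ x * ∑ a, (∑ w, W x w * f (a - w)) ^ 2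
      = ∑ x, μ x * ((Fintype.card G : ℝ) * ∑ a, (∑ w, W x w * f (a - w)) ^ 2) := by
        rw [Finset.mul_sum]; exact Finset.sum_congr rfl fun x _ => by ring
    _ = ∑ x, μ x * ∑ y : G, Complex.normSq (∑ w, (W x w : ℂ) * omg p (dot y w))
          * Complex.normSq (∑ a, (f a : ℂ) * omg p (dot y a)) := by
        refine Finset.sum_congr rfl fun x _ => ?_
        rw [← parseval hd1 hd2 hnd (fun a => ∑ w, W x w * f (a - w))]
        congr 1
        refine Finset.sum_congr rfl fun y _ => ?_
        rw [conv_hat hd2, Complex.normSq_mul]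
    _ = ∑ y : G, (∑ x, μ x * Complex.normSq (∑ w, (W x w : ℂ) * omg p (dot y w)))
          * Complex.normSq (∑ a, (f a : ℂ) * omg p (dot y a)) := by
        simp only [Finset.mul_sum]
        rw [Finset.sum_comm]
        refine Finset.sum_congr rfl fun y _ => ?_
        rw [Finset.sum_mul]
        exact Finset.sum_congr rfl fun x _ => by ring
    _ ≤ ∑ y : G, δ ^ 2 * Complex.normSq (∑ a, (f a : ℂ) * omg p (dot y a)) := by
        refine Finset.sum_le_sum fun y _ => ?_
        by_cases hy : y = 0
        · subst hy
          have h0 : (∑ a, (f a : ℂ) * omg p (dot 0 a)) = 0 := by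
            have : ∀ a : G, dot (0 : G) a = 0 := by
              intro a
              have := hd1 0 0 a
              rw [add_zero] at this
              exact left_eq_add.mp this
            simp only [this, omg_zero, mul_one, ← Complex.ofReal_sum, hf0,
              Complex.ofReal_zero]
          rw [h0]
          simp
        · exact mul_le_mul_of_nonneg_right (hbias y hy) (Complex.normSq_nonneg _)
    _ = δ ^ 2 * ∑ y : G, Complex.normSq (∑ a, (f a : ℂ) * omg p (dot y a)) := by
        rw [Finset.mul_sum]
    _ = (Fintype.card G : ℝ) * (δ ^ 2 * ∑ a, (f a) ^ 2) := by
        rw [parseval hd1 hd2 hnd f]; ring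

end FourierAux

/-- Proposition `Lem6-1` (Dodis–Smith) of the paper: a `δ`-biased ensemble of
random variables on `𝔽_q^n`, convolved with a joint sub-distribution, decreases
`d₂` by a factor `δ²`, which is further bounded by `δ²·e^{-H₂}`. -/
theorem statement3
    (p k n q : ℕ) [Fact p.Prime] (hk : 0 < k) (hq : q = p ^ k)
    (F : Type*) [Field F] [Fintype F] (hF : Fintype.card F = q)
    (B : F → F → ZMod p)
    (hB1 : ∀ x y z : F, B (x + y) z = B x z + B y z)
    (hB2 : ∀ x y z : F, B x (y + z) = B x y + B x z)
    (hBl : ∀ x : F, (∀ y, B x y = 0) → x = 0)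
    (hBr : ∀ y : F, (∀ x, B x y = 0) → y = 0)
    (E : Type*) [Fintype E] [Nonempty E]
    (P : (Fin n → F) × E → ℝ) (hP : IsSubDist P)
    (Q : E → ℝ) (hQ : IsDist Q) (hQpos : ∀ e, 0 < Q e)
    (X : Type*) [Fintype X] (μ : X → ℝ) (hμ : IsDist μ)
    (W : X → (Fin n → F) → ℝ) (hW : ∀ x, IsDist (W x)) (δ : ℝ)
    (hbias : ∀ y : Fin n → F, y ≠ 0 →
      ∑ x, μ x * Complex.normSq (∑ w, (W x w : ℂ) * omg p (∑ j, B (y j) (w j))) ≤ δ ^ 2) :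
    (∑ x, μ x *
        d2cond (fun ae : (Fin n → F) × E => ∑ w, W x w * P (ae.1 - w, ae.2)) Q) ≤
      δ ^ 2 * d2cond P Q ∧
    δ ^ 2 * d2cond P Q ≤ δ ^ 2 * Real.exp (-H2cond P Q) := by

  classical
  have hB0 : ∀ z : F, B 0 z = 0 := fun z => by
    have h := hB1 0 0 z; rw [add_zero] at h; exact (left_eq_add.mp h)
  set dot : (Fin n → F) → (Fin n → F) → ZMod p :=
    fun y w => ∑ j, B (y j) (w j) with hdot
  have hd1 : ∀ x y z : Fin n → F, dot (x + y) z = dot x z + dot y z := by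
    intro x y z
    simp only [hdot, Pi.add_apply, hB1, Finset.sum_add_distrib]
  have hd2 : ∀ y a b : Fin n → F, dot y (a + b) = dot y a + dot y b := by
    intro y a b
    simp only [hdot, Pi.add_apply, hB2, Finset.sum_add_distrib]
  have hnd : ∀ c : Fin n → F, c ≠ 0 → ∃ y, dot y c ≠ 0 := by
    intro c hc
    obtain ⟨j, hj⟩ := Function.ne_iff.mp hc
    have hx : ∃ x, B x (c j) ≠ 0 := by
      by_contra h; push_neg at h; exact hj (hBr _ h)
    obtain ⟨x, hx⟩ := hx
    refine ⟨Pi.single j x, ?_⟩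
    have heq : dot (Pi.single j x) c = B x (c j) := by
      simp only [hdot]
      rw [Finset.sum_eq_single j]
      · rw [Pi.single_eq_same]
      · intro b _ hb; rw [Pi.single_eq_of_ne hb, hB0]
      · intro h; exact absurd (Finset.mem_univ j) h
    rw [heq]; exact hx
  set K : ℝ := (Fintype.card (Fin n → F) : ℝ) with hKdef
  have hK : (0 : ℝ) < K := by
    simp only [hKdef]; positivity
  set f : E → (Fin n → F) → ℝ :=
    fun e b => P (b, e) - margE P e / K with hfdef
  have hf0 : ∀ e, ∑ b, f e b = 0 := by
    intro e
    simp only [hfdef]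
    rw [Finset.sum_sub_distrib, Finset.sum_const, Finset.card_univ, nsmul_eq_mul,
      ← hKdef, mul_comm, div_mul_cancel₀ _ hK.ne', margE, sub_self]
  have hmarg : ∀ (x : X) (e : E),
      margE (fun ae : (Fin n → F) × E => ∑ w, W x w * P (ae.1 - w, ae.2)) e
        = margE P e := by
    intro x e
    rw [margE, Finset.sum_comm]
    calc ∑ w, ∑ a, W x w * P (a - w, e)
        = ∑ w, W x w * margE P e := by
          refine Finset.sum_congr rfl fun w _ => ?_
          rw [← Finset.mul_sum]
          congr 1
          rw [margE]
          exact Fintype.sum_equiv (Equiv.subRight w) _ _ fun a => rfl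
      _ = margE P e := by rw [← Finset.sum_mul, (hW x).2, one_mul]
  have hconvdev : ∀ (x : X) (e : E) (a : Fin n → F),
      (∑ w, W x w * P (a - w, e)) - margE P e / K
        = ∑ w, W x w * f e (a - w) := by
    intro x e a
    simp only [hfdef, mul_sub]
    rw [Finset.sum_sub_distrib, ← Finset.sum_mul, (hW x).2, one_mul]
  have hd2conv : ∀ x : X,
      d2cond (fun ae : (Fin n → F) × E => ∑ w, W x w * P (ae.1 - w, ae.2)) Q
        = ∑ e, (∑ a, (∑ w, W x w * f e (a - w)) ^ 2) / Q e := by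
    intro x
    rw [d2cond, Finset.sum_comm]
    refine Finset.sum_congr rfl fun e _ => ?_
    rw [← Finset.sum_div]
    congr 1
    refine Finset.sum_congr rfl fun a _ => ?_
    rw [hmarg x e, hconvdev x e a]
  have hd2P : d2cond P Q = ∑ e, (∑ a, (f e a) ^ 2) / Q e := by
    rw [d2cond, Finset.sum_comm]
    refine Finset.sum_congr rfl fun e _ => ?_
    rw [← Finset.sum_div]
  have hμnn : ∀ x, 0 ≤ μ x := hμ.1
  constructor
  · calc (∑ x, μ x *
          d2cond (fun ae : (Fin n → F) × E => ∑ w, W x w * P (ae.1 - w, ae.2)) Q)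
        = ∑ e, (∑ x, μ x * ∑ a, (∑ w, W x w * f e (a - w)) ^ 2) / Q e := by
          simp only [hd2conv, Finset.mul_sum]
          rw [Finset.sum_comm]
          refine Finset.sum_congr rfl fun e _ => ?_
          rw [Finset.sum_div]
          exact Finset.sum_congr rfl fun x _ => by
            rw [← Finset.mul_sum, ← mul_div_assoc]
      _ ≤ ∑ e, (δ ^ 2 * ∑ a, (f e a) ^ 2) / Q e := by
          refine Finset.sum_le_sum fun e _ => ?_
          have hb := avg_bound hd1 hd2 hnd μ hμnn W δ hbias (f e) (hf0 e)
          exact (div_le_div_iff_of_pos_right (hQpos e)).mpr hb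
      _ = δ ^ 2 * d2cond P Q := by
          rw [hd2P, Finset.mul_sum]
          exact Finset.sum_congr rfl fun e _ => (mul_div_assoc _ _ _)
  · have hSnn : (0:ℝ) ≤ ∑ a, ∑ e, P (a, e) ^ 2 / Q e := by
      refine Finset.sum_nonneg fun a _ => Finset.sum_nonneg fun e _ => ?_
      exact div_nonneg (sq_nonneg _) (hQpos e).le
    have hd2S : d2cond P Q ≤ ∑ a, ∑ e, P (a, e) ^ 2 / Q e := by
      rw [d2cond, Finset.sum_comm]
      rw [Finset.sum_comm (s := (Finset.univ : Finset (Fin n → F)))]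
      refine Finset.sum_le_sum fun e _ => ?_
      rw [← Finset.sum_div, ← Finset.sum_div]
      have hinner : ∑ a, (P (a, e) - margE P e / K) ^ 2 ≤ ∑ a, P (a, e) ^ 2 := by
        have hexp : ∑ a, (P (a, e) - margE P e / K) ^ 2
            = (∑ a, P (a, e) ^ 2) - 2 * (margE P e / K) * margE P e
              + K * (margE P e / K) ^ 2 := by
          have : ∀ a : Fin n → F, (P (a, e) - margE P e / K) ^ 2
              = P (a, e) ^ 2 - 2 * (margE P e / K) * P (a, e)
                + (margE P e / K) ^ 2 := fun a => by ring
          rw [Finset.sum_congr rfl fun a _ => this a]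
          rw [Finset.sum_add_distrib, Finset.sum_sub_distrib, ← Finset.mul_sum,
            Finset.sum_const, Finset.card_univ, nsmul_eq_mul, margE]
        rw [hexp]
        have h1 : K * (margE P e / K) ^ 2 = (margE P e) ^ 2 / K := by
          field_simp
        have h2 : 2 * (margE P e / K) * margE P e = 2 * (margE P e) ^ 2 / K := by
          field_simp
        rw [h1, h2]
        have h3 : (0:ℝ) ≤ (margE P e) ^ 2 / K := div_nonneg (sq_nonneg _) hK.le
        have h4 : (∑ a, P (a, e) ^ 2) - 2 * margE P e ^ 2 / K + margE P e ^ 2 / K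
            = (∑ a, P (a, e) ^ 2) - margE P e ^ 2 / K := by ring
        rw [h4]
        exact sub_le_self _ h3
      exact (div_le_div_iff_of_pos_right (hQpos e)).mpr hinner
    have hfin : d2cond P Q ≤ Real.exp (-H2cond P Q) := by
      rcases eq_or_lt_of_le hSnn with hS | hS
      · exact le_trans hd2S (le_trans (le_of_eq hS.symm) (Real.exp_pos _).le)
      · rw [H2cond, neg_neg, Real.exp_log hS]
        exact hd2S
    exact mul_le_mul_of_nonneg_left hfin (sq_nonneg δ)

end Hayashi
end

section
/- Let P_{A,E} be a joint sub-distribution on 𝒜 × ℰ, let Q_E be a normalized distribution on ℰ with full support, let R ∈ ℝ, and set S_R := {(a,e) ∈ 𝒜 × ℰ : P_{A,E}(a,e) > e^{−R}·Q_E(e)}. Then min{‖P_{A,E} − P'‖₁ : P' a sub-distribution on 𝒜 × ℰ with H_min(A|E|P'‖Q_E) ≥ R} = min{‖P_{A,E} − P'‖₁ : P' a sub-distribution with H_min(A|E|P'‖Q_E) ≥ R and P'(a,e) ≤ P_{A,E}(a,e) for all (a,e)} = ∑_{(a,e)∈S_R} P_{A,E}(a,e) − e^{−R}·∑_{(a,e)∈S_R}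 Q_E(e). Moreover, for every c > 1, (1 − 1/c)·∑_{(a,e): P_{A,E}(a,e) > c·e^{−R}·Q_E(e)} P_{A,E}(a,e) ≤ ∑_{(a,e)∈S_R} P_{A,E}(a,e) − e^{−R}·∑_{(a,e)∈S_R} Q_E(e) ≤ ∑_{(a,e)∈S_R} P_{A,E}(a,e). -/
open Real Finset Filter

attribute [local instance] Classical.propDecidable

namespace Hayashi

variable {A E : Type*} [Fintype A] [Fintype E]

private lemma sup_spec {A E : Type*} [Fintype A] [Fintype E] [Nonempty A] [Nonempty E]
    (P' : A × E → ℝ) (Q : E → ℝ) (hQpos : ∀ e, 0 < Q e) :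
    (∀ a e, P' (a, e) / Q e ≤ sSup {r | ∃ a e, 0 < Q e ∧ r = P' (a, e) / Q e}) ∧
    ∃ a e, sSup {r | ∃ a e, 0 < Q e ∧ r = P' (a, e) / Q e} = P' (a, e) / Q e := by
  have hset : {r | ∃ a e, 0 < Q e ∧ r = P' (a, e) / Q e} =
      Set.range (fun z : A × E => P' z / Q z.2) := by
    ext r
    constructor
    · rintro ⟨a, e, _, rfl⟩; exact ⟨(a, e), rfl⟩
    · rintro ⟨⟨a, e⟩, rfl⟩; exact ⟨a, e, hQpos e, rfl⟩
  rw [hset]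
  have hfin : (Set.range (fun z : A × E => P' z / Q z.2)).Finite := Set.finite_range _
  have hne : (Set.range (fun z : A × E => P' z / Q z.2)).Nonempty := Set.range_nonempty _
  constructor
  · intro a e
    exact le_csSup hfin.bddAbove ⟨(a, e), rfl⟩
  · obtain ⟨⟨a, e⟩, h⟩ := hne.csSup_mem hfin
    exact ⟨a, e, h.symm⟩

private lemma le_of_hmin {A E : Type*} [Fintype A] [Fintype E] [Nonempty A] [Nonempty E]
    (P' : A × E → ℝ) (Q : E → ℝ) (hQpos : ∀ e, 0 < Q e) (R : ℝ)
    (hP'0 : ∀ z, 0 ≤ P' z) (hR : R ≤ Hmin P' Q) :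
    ∀ a e, P' (a, e) ≤ Real.exp (-R) * Q e := by
  obtain ⟨hub, a0, e0, hm⟩ := sup_spec P' Q hQpos
  simp only [Hmin] at hR
  set m := sSup {r | ∃ a e, 0 < Q e ∧ r = P' (a, e) / Q e} with hmdef
  intro a e
  have h1 : P' (a, e) / Q e ≤ m := hub a e
  have key : P' (a, e) / Q e ≤ Real.exp (-R) := by
    rcases le_or_gt m 0 with hm0 | hm0
    · exact h1.trans (hm0.trans (Real.exp_pos _).le)
    · have hlog : Real.log m ≤ -R := by linarith
      have := Real.exp_le_exp.2 hlog
      rw [Real.exp_log hm0] at this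
      exact h1.trans this
  have := (div_le_iff₀ (hQpos e)).1 key
  linarith [this, mul_comm (Real.exp (-R)) (Q e)]

private lemma hmin_ge {A E : Type*} [Fintype A] [Fintype E] [Nonempty A] [Nonempty E]
    (P' : A × E → ℝ) (Q : E → ℝ) (hQpos : ∀ e, 0 < Q e) (R : ℝ)
    (hpos : ∃ z, 0 < P' z) (hle : ∀ a e, P' (a, e) ≤ Real.exp (-R) * Q e) :
    R ≤ Hmin P' Q := by
  obtain ⟨hub, a0, e0, hm⟩ := sup_spec P' Q hQpos
  simp only [Hmin]
  set m := sSup {r | ∃ a e, 0 < Q e ∧ r = P' (a, e) / Q e} with hmdef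
  obtain ⟨⟨a1, e1⟩, h1⟩ := hpos
  have hmpos : 0 < m := lt_of_lt_of_le (div_pos h1 (hQpos e1)) (hub a1 e1)
  have hmle : m ≤ Real.exp (-R) := by
    rw [hm, div_le_iff₀ (hQpos e0)]
    calc P' (a0, e0) ≤ Real.exp (-R) * Q e0 := hle a0 e0
    _ = Real.exp (-R) * Q e0 := rfl
  have hlog : Real.log m ≤ -R := by
    have := Real.log_le_log hmpos hmle
    rwa [Real.log_exp] at this
  linarith

/-- Lemma `L8-29-1` of the paper: the minimal `ℓ¹`-distance from `P_{A,E}` to a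
sub-distribution with `H_min(A|E|·‖Q_E) ≥ R` is attained under the additional
constraint `P' ≤ P`, equals an explicit tail expression, and is sandwiched by
tail probabilities. -/
theorem statement9 {A E : Type*} [Fintype A] [Fintype E] [Nonempty A] [Nonempty E]
    (P : A × E → ℝ) (hP : IsSubDist P)
    (Q : E → ℝ) (hQ : IsDist Q) (hQpos : ∀ e, 0 < Q e) (R : ℝ) :
    (sInf {x | ∃ P' : A × E → ℝ, IsSubDist P' ∧ R ≤ Hmin P' Q ∧ x = l1 P P'} =
      sInf {x | ∃ P' : A × E → ℝ, IsSubDist P' ∧ R ≤ Hmin P' Q ∧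
        (∀ z, P' z ≤ P z) ∧ x = l1 P P'}) ∧
    (sInf {x | ∃ P' : A × E → ℝ, IsSubDist P' ∧ R ≤ Hmin P' Q ∧ x = l1 P P'} =
      (∑ a, ∑ e, (if Real.exp (-R) * Q e < P (a, e) then P (a, e) else 0)) -
        Real.exp (-R) *
          ∑ a : A, ∑ e, (if Real.exp (-R) * Q e < P (a, e) then Q e else 0)) ∧
    (∀ c : ℝ, 1 < c →
      (1 - 1 / c) *
          (∑ a, ∑ e, (if c * Real.exp (-R) * Q e < P (a, e) then P (a, e) else 0)) ≤
        (∑ a, ∑ e, (if Real.exp (-R) * Q e < P (a, e) then P (a, e) else 0)) -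
          Real.exp (-R) *
            ∑ a : A, ∑ e, (if Real.exp (-R) * Q e < P (a, e) then Q e else 0) ∧
      (∑ a, ∑ e, (if Real.exp (-R) * Q e < P (a, e) then P (a, e) else 0)) -
          Real.exp (-R) *
            ∑ a : A, ∑ e, (if Real.exp (-R) * Q e < P (a, e) then Q e else 0) ≤
        ∑ a, ∑ e, (if Real.exp (-R) * Q e < P (a, e) then P (a, e) else 0)) := by
  have hT : (0:ℝ) < Real.exp (-R) := Real.exp_pos _
  set T := Real.exp (-R) with hTdef
  set D' := ∑ a, ∑ e, (if T * Q e < P (a, e) then P (a, e) - T * Q e else 0) with hD'def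
  -- the tail expression in the statement equals D'
  have hDeq : (∑ a, ∑ e, (if T * Q e < P (a, e) then P (a, e) else 0)) -
      T * ∑ a : A, ∑ e, (if T * Q e < P (a, e) then Q e else 0) = D' := by
    rw [Finset.mul_sum, ← Finset.sum_sub_distrib]
    refine Finset.sum_congr rfl fun a _ => ?_
    rw [Finset.mul_sum, ← Finset.sum_sub_distrib]
    refine Finset.sum_congr rfl fun e _ => ?_
    by_cases h : T * Q e < P (a, e) <;> simp [h]
  set S1 := {x | ∃ P' : A × E → ℝ, IsSubDist P' ∧ R ≤ Hmin P' Q ∧ x = l1 P P'} with hS1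
  set S2 := {x | ∃ P' : A × E → ℝ, IsSubDist P' ∧ R ≤ Hmin P' Q ∧
      (∀ z, P' z ≤ P z) ∧ x = l1 P P'} with hS2
  -- lower bound: every candidate distance is at least D'
  have hlow : ∀ x ∈ S1, D' ≤ x := by
    rintro x ⟨P', hsub, hR', rfl⟩
    have hle := le_of_hmin P' Q hQpos R hsub.1 hR'
    rw [hD'def]
    simp only [l1]
    refine Finset.sum_le_sum fun a _ => Finset.sum_le_sum fun e _ => ?_
    by_cases h : T * Q e < P (a, e)
    · rw [if_pos h]
      have h1 : P' (a, e) ≤ T * Q e := hle a e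
      have h2 := le_abs_self (P (a, e) - P' (a, e))
      linarith
    · rw [if_neg h]; exact abs_nonneg _
  have hS2sub : S2 ⊆ S1 := by
    rintro x ⟨P', hsub, hR', _, rfl⟩; exact ⟨P', hsub, hR', rfl⟩
  have hlow2 : ∀ x ∈ S2, D' ≤ x := fun x hx => hlow x (hS2sub hx)
  -- claims 1 and 2
  have hmain : sInf S1 = D' ∧ sInf S2 = D' := by
    by_cases hdeg : ∃ z, 0 < P z
    · -- nondegenerate case: the optimizer min(P, T·Q)
      obtain ⟨z0, hz0⟩ := hdeg
      set Popt : A × E → ℝ := fun z => min (P z) (T * Q z.2) with hPopt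
      have hsub : IsSubDist Popt := by
        constructor
        · intro z; exact le_min (hP.1 z) (mul_pos hT (hQpos z.2)).le
        · exact le_trans (Finset.sum_le_sum fun z _ => min_le_left _ _) hP.2
      have hHmin : R ≤ Hmin Popt Q := by
        refine hmin_ge Popt Q hQpos R ⟨z0, lt_min hz0 (mul_pos hT (hQpos z0.2))⟩ fun a e => ?_
        exact min_le_right _ _
      have hl1 : l1 P Popt = D' := by
        simp only [l1, hD'def]
        refine Finset.sum_congr rfl fun a _ => Finset.sum_congr rfl fun e _ => ?_
        by_cases h : T * Q e < P (a, e)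
        · rw [if_pos h]
          have : Popt (a, e) = T * Q e := min_eq_right h.le
          rw [this, abs_of_nonneg (by linarith)]
        · rw [if_neg h]
          have : Popt (a, e) = P (a, e) := min_eq_left (not_lt.1 h)
          rw [this, sub_self, abs_zero]
      have hmem1 : D' ∈ S1 := ⟨Popt, hsub, hHmin, hl1.symm⟩
      have hmem2 : D' ∈ S2 := ⟨Popt, hsub, hHmin, fun z => min_le_left _ _, hl1.symm⟩
      exact ⟨le_antisymm (csInf_le ⟨D', hlow⟩ hmem1) (le_csInf ⟨D', hmem1⟩ hlow),
        le_antisymm (csInf_le ⟨D', hlow2⟩ hmem2) (le_csInf ⟨D', hmem2⟩ hlow2)⟩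
    · -- degenerate case: P ≡ 0
      push_neg at hdeg
      have hP0 : ∀ z, P z = 0 := fun z => le_antisymm (hdeg z) (hP.1 z)
      have hD'0 : D' = 0 := by
        rw [hD'def]
        refine Finset.sum_eq_zero fun a _ => Finset.sum_eq_zero fun e _ => ?_
        rw [if_neg]
        rw [hP0 (a, e)]
        exact not_lt.2 (mul_pos hT (hQpos e)).le
      -- helper family for S1
      have hx0 : ∀ x ∈ S1, 0 ≤ x := by
        rintro x ⟨P', _, _, rfl⟩
        exact Finset.sum_nonneg fun a _ => Finset.sum_nonneg fun e _ => abs_nonneg _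
      have hfam : ∀ t : ℝ, 0 < t → t ≤ min 1 T → t ∈ S1 := by
        intro t ht htle
        have ht1 : t ≤ 1 := htle.trans (min_le_left _ _)
        have htT : t ≤ T := htle.trans (min_le_right _ _)
        obtain ⟨a0⟩ := ‹Nonempty A›
        refine ⟨fun z => if z.1 = a0 then t * Q z.2 else 0, ⟨?_, ?_⟩, ?_, ?_⟩
        · intro z
          by_cases h : z.1 = a0 <;> simp [h]
          exact (mul_pos ht (hQpos z.2)).le
        · have : ∑ z : A × E, (if z.1 = a0 then t * Q z.2 else 0) = t := by
            rw [Fintype.sum_prod_type]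
            show (∑ a : A, ∑ e : E, if a = a0 then t * Q e else 0) = t
            rw [Finset.sum_eq_single a0
              (fun b _ hb => Finset.sum_eq_zero fun e _ => if_neg hb)
              (fun h => absurd (Finset.mem_univ a0) h)]
            calc (∑ e : E, if (a0 : A) = a0 then t * Q e else 0)
                = ∑ e : E, t * Q e := Finset.sum_congr rfl fun e _ => if_pos rfl
              _ = t := by rw [← Finset.mul_sum, hQ.2, mul_one]
          rw [this]; exact ht1
        · refine hmin_ge _ Q hQpos R ?_ ?_
          · obtain ⟨e0⟩ := ‹Nonempty E›
            exact ⟨(a0, e0), by simp [mul_pos ht (hQpos e0)]⟩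
          · intro a e
            by_cases h : a = a0
            · simp only [h, if_pos rfl]
              exact mul_le_mul_of_nonneg_right htT (hQpos e).le
            · simp only [if_neg h]; exact (mul_pos hT (hQpos e)).le
        · simp only [l1]
          have : ∀ a e, |P (a, e) - (if a = a0 then t * Q e else 0)| =
              (if a = a0 then t * Q e else 0) := by
            intro a e
            rw [hP0 (a, e), zero_sub, abs_neg, abs_of_nonneg]
            by_cases h : a = a0 <;> simp [h]
            exact (mul_pos ht (hQpos e)).le
          simp only [this]
          rw [Finset.sum_eq_single a0
            (fun b _ hb => Finset.sum_eq_zero fun e _ => if_neg hb)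
            (fun h => absurd (Finset.mem_univ a0) h)]
          calc t = ∑ e : E, t * Q e := by rw [← Finset.mul_sum, hQ.2, mul_one]
            _ = ∑ e : E, if (a0 : A) = a0 then t * Q e else 0 :=
              Finset.sum_congr rfl fun e _ => (if_pos rfl).symm
      have hS1inf : sInf S1 = 0 := by
        have t0mem : min 1 T ∈ S1 := hfam _ (lt_min one_pos hT) le_rfl
        refine le_antisymm ?_ (le_csInf ⟨_, t0mem⟩ hx0)
        by_contra h
        push_neg at h
        set t := min (sInf S1 / 2) (min 1 T) with htdef
        have ht : 0 < t := lt_min (by linarith) (lt_min one_pos hT)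
        have : sInf S1 ≤ t := csInf_le ⟨D', hlow⟩ (hfam t ht (min_le_right _ _))
        have : sInf S1 ≤ sInf S1 / 2 := this.trans (min_le_left _ _)
        linarith
      have hS2inf : sInf S2 = 0 := by
        have hsub0 : S2 ⊆ {0} := by
          rintro x ⟨P', hsub, _, hlep, rfl⟩
          have hP'0 : ∀ z, P' z = 0 := fun z =>
            le_antisymm ((hlep z).trans (hP0 z).le) (hsub.1 z)
          simp only [Set.mem_singleton_iff, l1]
          refine Finset.sum_eq_zero fun a _ => Finset.sum_eq_zero fun e _ => ?_
          rw [hP0 (a, e), hP'0 (a, e), sub_self, abs_zero]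
        by_cases hne : S2.Nonempty
        · rw [hne.subset_singleton_iff.1 hsub0]
          exact csInf_singleton 0
        · rw [Set.not_nonempty_iff_eq_empty.1 hne, Real.sInf_empty]
      exact ⟨hS1inf.trans hD'0.symm, hS2inf.trans hD'0.symm⟩
  refine ⟨hmain.1.trans hmain.2.symm, by rw [hmain.1, hDeq], ?_⟩
  -- claim 3: the sandwich bounds
  intro c hc
  have hc0 : (0:ℝ) < c := by linarith
  rw [hDeq]
  constructor
  · have hL : (1 - 1 / c) * (∑ a, ∑ e, (if c * T * Q e < P (a, e) then P (a, e) else 0)) =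
        ∑ a, ∑ e, (if c * T * Q e < P (a, e) then (1 - 1 / c) * P (a, e) else 0) := by
      rw [Finset.mul_sum]
      refine Finset.sum_congr rfl fun a _ => ?_
      rw [Finset.mul_sum]
      refine Finset.sum_congr rfl fun e _ => ?_
      by_cases h : c * T * Q e < P (a, e) <;> simp [h]
    rw [hL, hD'def]
    refine Finset.sum_le_sum fun a _ => Finset.sum_le_sum fun e _ => ?_
    by_cases h : c * T * Q e < P (a, e)
    · have hq := hQpos e
      have hTQ : 0 < T * Q e := mul_pos hT hq
      have hassoc : c * T * Q e = c * (T * Q e) := by ring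
      have h2 : T * Q e < P (a, e) := by
        have h5 : T * Q e < c * (T * Q e) := lt_mul_of_one_lt_left hTQ hc
        linarith
      rw [if_pos h, if_pos h2]
      have h3 : T * Q e ≤ P (a, e) / c := by
        rw [le_div_iff₀ hc0]
        have : T * Q e * c = c * T * Q e := by ring
        linarith
      have h4 : (1 - 1 / c) * P (a, e) = P (a, e) - P (a, e) / c := by ring
      linarith
    · rw [if_neg h]
      by_cases h2 : T * Q e < P (a, e)
      · rw [if_pos h2]; linarith
      · rw [if_neg h2]
  · rw [hD'def]
    refine Finset.sum_le_sum fun a _ => Finset.sum_le_sum fun e _ => ?_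
    by_cases h : T * Q e < P (a, e)
    · rw [if_pos h, if_pos h]
      have : 0 ≤ T * Q e := (mul_pos hT (hQpos e)).le
      linarith
    · rw [if_neg h, if_neg h]
end Hayashi
end

section
/- For every joint sub-distribution P_{A,E} on 𝒜 × ℰ, every M ≥ 1, every ε > 0, and every s ∈ (0, 1/2], Δ_{d,2}(M,ε|P_{A,E}) ≤ (2 + √ε)·M^s·e^{−s·H^↑_{1/(1−s)}(A|E|P_{A,E})}. -/
open Real Finset Filter

attribute [local instance] Classical.propDecidable

namespace Hayashi

variable {A E : Type*} [Fintype A] [Fintype E]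

lemma aux_sum_nonneg {A E : Type*} [Fintype A] [Fintype E] (f : A → E → ℝ)
    (h0 : ∀ a e, 0 ≤ f a e) : 0 ≤ ∑ a, ∑ e, f a e :=
  Finset.sum_nonneg fun a _ => Finset.sum_nonneg fun e _ => h0 a e

lemma aux_sum_pos {A E : Type*} [Fintype A] [Fintype E] (f : A → E → ℝ)
    (h0 : ∀ a e, 0 ≤ f a e) (a₀ : A) (e₀ : E) (hpos : 0 < f a₀ e₀) :
    0 < ∑ a, ∑ e, f a e := by
  have h1 : 0 < ∑ e, f a₀ e :=
    Finset.sum_pos' (fun e _ => h0 _ _) ⟨e₀, Finset.mem_univ _, hpos⟩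
  exact Finset.sum_pos' (fun a _ => Finset.sum_nonneg fun e _ => h0 _ _)
    ⟨a₀, Finset.mem_univ _, h1⟩

lemma aux_sum_le {A E : Type*} [Fintype A] [Fintype E] (f g : A → E → ℝ)
    (h : ∀ a e, f a e ≤ g a e) : ∑ a, ∑ e, f a e ≤ ∑ a, ∑ e, g a e :=
  Finset.sum_le_sum fun a _ => Finset.sum_le_sum fun e _ => h a e

lemma delta_bddBelow {A E : Type*} [Fintype A] [Fintype E] (P : A × E → ℝ) (M ε : ℝ) :
    BddBelow {x | ∃ (Q : E → ℝ) (P' : A × E → ℝ), IsDist Q ∧ (∀ e, 0 < Q e) ∧ IsSubDist P' ∧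
      x = 2 * l1 P P' + Real.sqrt ε * Real.sqrt M * Real.exp (-H2cond P' Q / 2)} := by
  refine ⟨0, fun x hx => ?_⟩
  obtain ⟨Q, P', _, _, _, rfl⟩ := hx
  have h1 : 0 ≤ l1 P P' :=
    Finset.sum_nonneg fun a _ => Finset.sum_nonneg fun e _ => abs_nonneg _
  have h2 : 0 ≤ Real.sqrt ε * Real.sqrt M * Real.exp (-H2cond P' Q / 2) := by positivity
  linarith

lemma key_perQ {A E : Type*} [Fintype A] [Fintype E] (P : A × E → ℝ) (hP : IsSubDist P)
    (M ε s : ℝ) (hM : 1 ≤ M) (hε : 0 < ε) (hs0 : 0 < s) (hs1 : s ≤ 1 / 2)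
    (Q : E → ℝ) (hQ : IsDist Q) (hQpos : ∀ e, 0 < Q e)
    (a₀ : A) (e₀ : E) (hPne : 0 < P (a₀, e₀)) :
    Delta_d2 M ε P ≤ (2 + Real.sqrt ε) * M ^ s *
      Real.exp (-(s * condRenyi P Q (s / (1 - s)))) := by
  have hs1' : (0:ℝ) < 1 - s := by linarith
  set s' := s / (1 - s) with hs'def
  have hs'0 : 0 < s' := div_pos hs0 hs1'
  have hs'1 : s' ≤ 1 := by rw [hs'def, div_le_one hs1']; linarith
  have hMpos : (0:ℝ) < M := lt_of_lt_of_le one_pos hM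
  set T := ∑ a, ∑ e, P (a, e) ^ (1 + s') * Q e ^ (-s') with hTdef
  have hT : 0 < T := by
    refine aux_sum_pos _ (fun a e => mul_nonneg (Real.rpow_nonneg (hP.1 _) _)
      (Real.rpow_nonneg (hQpos _).le _)) a₀ e₀ ?_
    exact mul_pos (Real.rpow_pos_of_pos hPne _) (Real.rpow_pos_of_pos (hQpos _) _)
  set lT := Real.log T with hlT
  set lM := Real.log M with hlM
  set z := (1 - s) * (lT - lM) with hzdef
  set c := Real.exp z with hcdef
  have hc : 0 < c := Real.exp_pos _
  set P' : A × E → ℝ := fun ae => min (P ae) (c * Q ae.2) with hP'def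
  have hP'0 : ∀ ae, 0 ≤ P' ae := fun ae => le_min (hP.1 ae) (mul_pos hc (hQpos ae.2)).le
  have hP'leP : ∀ ae, P' ae ≤ P ae := fun ae => min_le_left _ _
  have hP'sub : IsSubDist P' :=
    ⟨hP'0, le_trans (Finset.sum_le_sum fun x _ => hP'leP x) hP.2⟩
  -- bound on l1
  have hl1 : l1 P P' ≤ c ^ (-s') * T := by
    have hrw : c ^ (-s') * T = ∑ a, ∑ e, c ^ (-s') * (P (a, e) ^ (1 + s') * Q e ^ (-s')) := by
      rw [hTdef, Finset.mul_sum]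
      exact Finset.sum_congr rfl fun a _ => Finset.mul_sum _ _ _
    rw [l1, hrw]
    refine Finset.sum_le_sum fun a _ => Finset.sum_le_sum fun e _ => ?_
    have hq : 0 < Q e := hQpos e
    have hp0 : 0 ≤ P (a, e) := hP.1 _
    have hcq : 0 < c * Q e := mul_pos hc hq
    have hRHS : c ^ (-s') * (P (a, e) ^ (1 + s') * Q e ^ (-s'))
        = P (a, e) ^ (1 + s') * (c * Q e) ^ (-s') := by
      rw [Real.mul_rpow hc.le hq.le]; ring
    rw [hRHS]
    have habs : |P (a, e) - P' (a, e)| = P (a, e) - P' (a, e) :=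
      abs_of_nonneg (sub_nonneg.2 (hP'leP _))
    rw [habs]
    have hP'ae : P' (a, e) = min (P (a, e)) (c * Q e) := rfl
    by_cases hcase : P (a, e) ≤ c * Q e
    · rw [hP'ae, min_eq_left hcase, sub_self]
      positivity
    · push_neg at hcase
      rw [hP'ae, min_eq_right hcase.le]
      have hppos : 0 < P (a, e) := lt_trans hcq hcase
      have h1 : P (a, e) ^ (-s') ≤ (c * Q e) ^ (-s') :=
        Real.rpow_le_rpow_of_nonpos hcq hcase.le (by linarith)
      have h2 : P (a, e) = P (a, e) ^ (1 + s') * P (a, e) ^ (-s') := by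
        rw [← Real.rpow_add hppos]
        norm_num
      calc P (a, e) - c * Q e ≤ P (a, e) := by linarith
        _ = P (a, e) ^ (1 + s') * P (a, e) ^ (-s') := h2
        _ ≤ P (a, e) ^ (1 + s') * (c * Q e) ^ (-s') :=
            mul_le_mul_of_nonneg_left h1 (Real.rpow_nonneg hp0 _)
  -- bound on the H2 sum
  set S := ∑ a, ∑ e, P' (a, e) ^ 2 / Q e with hSdef
  have hS0 : 0 < S := by
    refine aux_sum_pos _ (fun a e => div_nonneg (sq_nonneg _) (hQpos e).le) a₀ e₀ ?_
    exact div_pos (pow_pos (lt_min hPne (mul_pos hc (hQpos e₀))) 2) (hQpos e₀)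
  have hSle : S ≤ c ^ (1 - s') * T := by
    have hrw : c ^ (1 - s') * T
        = ∑ a, ∑ e, c ^ (1 - s') * (P (a, e) ^ (1 + s') * Q e ^ (-s')) := by
      rw [hTdef, Finset.mul_sum]
      exact Finset.sum_congr rfl fun a _ => Finset.mul_sum _ _ _
    rw [hSdef, hrw]
    refine Finset.sum_le_sum fun a _ => Finset.sum_le_sum fun e _ => ?_
    have hq : 0 < Q e := hQpos e
    have hp0 : 0 ≤ P (a, e) := hP.1 _
    have hcq : 0 < c * Q e := mul_pos hc hq
    have hP'ae : P' (a, e) = min (P (a, e)) (c * Q e) := rfl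
    have hr : c ^ (1 - s') * (P (a, e) ^ (1 + s') * Q e ^ (-s'))
        = (P (a, e) ^ (1 + s') * (c * Q e) ^ (1 - s')) / Q e := by
      rw [Real.mul_rpow hc.le hq.le]
      have hqe : Q e ^ ((1:ℝ) - s') = Q e ^ (-s') * Q e := by
        rw [show (1:ℝ) - s' = -s' + 1 by ring, Real.rpow_add_one hq.ne']
      rw [hqe]
      field_simp
    rw [hr]
    rw [div_le_div_iff_of_pos_right hq]
    rcases eq_or_lt_of_le hp0 with h0 | hppos
    · have : P' (a, e) = 0 := by
        rw [hP'ae, ← h0, min_eq_left hcq.le]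
      rw [this]
      have : (0:ℝ) ^ 2 = 0 := by norm_num
      rw [this]
      positivity
    · have hP'pos : 0 < P' (a, e) := by
        rw [hP'ae]; exact lt_min hppos hcq
      have e2 : P' (a, e) ^ (2:ℕ) = P' (a, e) ^ ((1:ℝ) + s') * P' (a, e) ^ ((1:ℝ) - s') := by
        rw [← Real.rpow_add hP'pos,
          show (1:ℝ) + s' + (1 - s') = ((2:ℕ):ℝ) by push_cast; ring,
          Real.rpow_natCast]
      rw [e2]
      have h1 : P' (a, e) ^ ((1:ℝ) + s') ≤ P (a, e) ^ ((1:ℝ) + s') :=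
        Real.rpow_le_rpow (hP'0 _) (hP'leP _) (by linarith)
      have h2 : P' (a, e) ^ ((1:ℝ) - s') ≤ (c * Q e) ^ ((1:ℝ) - s') := by
        refine Real.rpow_le_rpow (hP'0 _) ?_ (by linarith)
        rw [hP'ae]; exact min_le_right _ _
      exact mul_le_mul h1 h2 (Real.rpow_nonneg hP'pos.le _) (Real.rpow_nonneg hp0 _)
  -- membership
  have hbdd := delta_bddBelow P M ε
  have hmem : (2 * l1 P P' + Real.sqrt ε * Real.sqrt M * Real.exp (-H2cond P' Q / 2)) ∈
      {x | ∃ (Q : E → ℝ) (P' : A × E → ℝ), IsDist Q ∧ (∀ e, 0 < Q e) ∧ IsSubDist P' ∧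
        x = 2 * l1 P P' + Real.sqrt ε * Real.sqrt M * Real.exp (-H2cond P' Q / 2)} :=
    ⟨Q, P', hQ, hQpos, hP'sub, rfl⟩
  have hle : Delta_d2 M ε P ≤
      2 * l1 P P' + Real.sqrt ε * Real.sqrt M * Real.exp (-H2cond P' Q / 2) :=
    csInf_le hbdd hmem
  refine le_trans hle ?_
  -- now the algebra
  have hW : (2 + Real.sqrt ε) * M ^ s * Real.exp (-(s * condRenyi P Q (s / (1 - s))))
      = (2 + Real.sqrt ε) * Real.exp (s * lM + (1 - s) * lT) := by
    have hCR : condRenyi P Q (s / (1 - s)) = (-1 / s') * lT := by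
      rw [condRenyi, ← hs'def, hlT, hTdef]
    rw [hCR, Real.rpow_def_of_pos hMpos, mul_assoc, ← Real.exp_add]
    congr 2
    rw [hlM, hs'def]
    field_simp
  have heq1 : c ^ (-s') * T = Real.exp (s * lM + (1 - s) * lT) := by
    rw [Real.rpow_def_of_pos hc, hcdef, Real.log_exp,
      show T = Real.exp lT from (Real.exp_log hT).symm, ← Real.exp_add]
    congr 1
    rw [hzdef, hs'def]
    field_simp
    ring
  have h1 : 2 * l1 P P' ≤ 2 * Real.exp (s * lM + (1 - s) * lT) := by
    rw [← heq1]; linarith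
  have hexp2 : Real.exp (-H2cond P' Q / 2) ≤ Real.exp (((1 - s') * z + lT) / 2) := by
    have hh : -H2cond P' Q / 2 = Real.log S / 2 := by
      rw [H2cond, ← hSdef]; ring
    rw [hh]
    refine Real.exp_le_exp.2 ?_
    have hls : Real.log S ≤ (1 - s') * z + lT := by
      calc Real.log S ≤ Real.log (c ^ (1 - s') * T) := Real.log_le_log hS0 hSle
        _ = (1 - s') * z + lT := by
            rw [Real.log_mul (Real.rpow_pos_of_pos hc _).ne' hT.ne', Real.log_rpow hc,
              hcdef, Real.log_exp, hlT]
    linarith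
  have hM2 : Real.sqrt M = Real.exp (lM / 2) := by
    rw [hlM, ← Real.log_sqrt hMpos.le, Real.exp_log (Real.sqrt_pos.2 hMpos)]
  have h2 : Real.sqrt ε * Real.sqrt M * Real.exp (-H2cond P' Q / 2)
      ≤ Real.sqrt ε * Real.exp (s * lM + (1 - s) * lT) := by
    calc Real.sqrt ε * Real.sqrt M * Real.exp (-H2cond P' Q / 2)
        ≤ Real.sqrt ε * Real.sqrt M * Real.exp (((1 - s') * z + lT) / 2) := by
          refine mul_le_mul_of_nonneg_left hexp2 (by positivity)
      _ = Real.sqrt ε * Real.exp (s * lM + (1 - s) * lT) := by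
          rw [hM2, mul_assoc, ← Real.exp_add]
          congr 2
          rw [hzdef, hs'def]
          field_simp
          ring
  rw [hW]
  have : (2 + Real.sqrt ε) * Real.exp (s * lM + (1 - s) * lT)
      = 2 * Real.exp (s * lM + (1 - s) * lT) + Real.sqrt ε * Real.exp (s * lM + (1 - s) * lT) := by
    ring
  linarith

/-- Lemma `Lem11` of the paper:
`Δ_{d,2}(M,ε|P) ≤ (2+√ε)·M^s·e^{-s·H^↑_{1/(1-s)}(A|E|P)}` for `s ∈ (0,1/2]`. -/
theorem statement11 {A E : Type*} [Fintype A] [Fintype E] [Nonempty A] [Nonempty E]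
    (P : A × E → ℝ) (hP : IsSubDist P)
    (M ε s : ℝ) (hM : 1 ≤ M) (hε : 0 < ε) (hs : s ∈ Set.Ioc (0 : ℝ) (1 / 2)) :
    Delta_d2 M ε P ≤
      (2 + Real.sqrt ε) * M ^ s *
        Real.exp (-(s * condRenyiUp P (s / (1 - s)))) := by
  obtain ⟨hs0, hs1⟩ := hs
  have hMpos : (0:ℝ) < M := lt_of_lt_of_le one_pos hM
  have hbdd := delta_bddBelow P M ε
  -- the uniform distribution on E
  have hcE : (0:ℝ) < (Fintype.card E : ℝ) := by
    exact_mod_cast Fintype.card_pos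
  set Qu : E → ℝ := fun _ => (Fintype.card E : ℝ)⁻¹ with hQudef
  have hQuD : IsDist Qu := by
    constructor
    · intro e; positivity
    · simp [hQudef, Finset.sum_const, Finset.card_univ]
  have hQupos : ∀ e, 0 < Qu e := fun e => by positivity
  by_cases hPz : ∃ ae : A × E, 0 < P ae
  · -- nonzero case
    obtain ⟨⟨a₀, e₀⟩, hpos⟩ := hPz
    set C := (2 + Real.sqrt ε) * M ^ s with hCdef
    have hC : 0 < C := by
      have : (0:ℝ) < M ^ s := Real.rpow_pos_of_pos hMpos s
      have h2 : (0:ℝ) ≤ Real.sqrt ε := Real.sqrt_nonneg _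
      positivity
    set D := Delta_d2 M ε P with hDdef
    by_cases hD : D ≤ 0
    · refine le_trans hD ?_
      have : (0:ℝ) < Real.exp (-(s * condRenyiUp P (s / (1 - s)))) := Real.exp_pos _
      positivity
    · push_neg at hD
      set Sset := {x | ∃ Q : E → ℝ, IsDist Q ∧ (∀ e, 0 < Q e) ∧ x = condRenyi P Q (s / (1 - s))}
        with hSsetdef
      have hne : Sset.Nonempty := ⟨condRenyi P Qu (s / (1 - s)), Qu, hQuD, hQupos, rfl⟩
      have hub : ∀ x ∈ Sset, x ≤ (Real.log C - Real.log D) / s := by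
        rintro x ⟨Q, hQd, hQp, rfl⟩
        have hkey : D ≤ C * Real.exp (-(s * condRenyi P Q (s / (1 - s)))) := by
          rw [hDdef, hCdef]
          exact key_perQ P hP M ε s hM hε hs0 hs1 Q hQd hQp a₀ e₀ hpos
        have hlog : Real.log D ≤ Real.log C + -(s * condRenyi P Q (s / (1 - s))) := by
          calc Real.log D ≤ Real.log (C * Real.exp (-(s * condRenyi P Q (s / (1 - s))))) :=
                Real.log_le_log hD hkey
            _ = Real.log C + -(s * condRenyi P Q (s / (1 - s))) := by
                rw [Real.log_mul hC.ne' (Real.exp_ne_zero _), Real.log_exp]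
        rw [le_div_iff₀ hs0]
        nlinarith
      have hsup : condRenyiUp P (s / (1 - s)) ≤ (Real.log C - Real.log D) / s := by
        rw [condRenyiUp]
        exact csSup_le hne hub
      have hfin : Real.log D ≤ Real.log C + -(s * condRenyiUp P (s / (1 - s))) := by
        have := (le_div_iff₀ hs0).1 hsup
        nlinarith
      calc D = Real.exp (Real.log D) := (Real.exp_log hD).symm
        _ ≤ Real.exp (Real.log C + -(s * condRenyiUp P (s / (1 - s)))) := Real.exp_le_exp.2 hfin
        _ = C * Real.exp (-(s * condRenyiUp P (s / (1 - s)))) := by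
            rw [Real.exp_add, Real.exp_log hC]
        _ = (2 + Real.sqrt ε) * M ^ s * Real.exp (-(s * condRenyiUp P (s / (1 - s)))) := by
            rw [hCdef]
  · -- P is identically zero
    push_neg at hPz
    have hP0 : ∀ ae : A × E, P ae = 0 := fun ae => le_antisymm (hPz ae) (hP.1 ae)
    have hcA : (0:ℝ) < (Fintype.card A : ℝ) := by exact_mod_cast Fintype.card_pos
    have hcA1 : (1:ℝ) ≤ (Fintype.card A : ℝ) := by
      exact_mod_cast Fintype.card_pos
    set R := (2 + Real.sqrt ε) * M ^ s * Real.exp (-(s * condRenyiUp P (s / (1 - s)))) with hRdef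
    have hR : 0 < R := by
      have : (0:ℝ) < M ^ s := Real.rpow_pos_of_pos hMpos s
      have h2 : (0:ℝ) ≤ Real.sqrt ε := Real.sqrt_nonneg _
      have h3 : (0:ℝ) < Real.exp (-(s * condRenyiUp P (s / (1 - s)))) := Real.exp_pos _
      positivity
    set K := 2 + Real.sqrt ε * Real.sqrt M with hKdef
    have hK : 0 < K := by positivity
    set δ := min 1 (R / K) with hδdef
    have hδ0 : 0 < δ := lt_min one_pos (div_pos hR hK)
    have hδ1 : δ ≤ 1 := min_le_left _ _
    have hδK : δ * K ≤ R := by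
      have : δ ≤ R / K := min_le_right _ _
      calc δ * K ≤ (R / K) * K := mul_le_mul_of_nonneg_right this hK.le
        _ = R := by field_simp
    set t := δ / ((Fintype.card A : ℝ) * (Fintype.card E : ℝ)) with htdef
    have ht0 : 0 < t := div_pos hδ0 (mul_pos hcA hcE)
    set P' : A × E → ℝ := fun _ => t with hP'def
    have hsum : ∀ r : ℝ, (∑ _a : A, ∑ _e : E, r) = (Fintype.card A : ℝ) * ((Fintype.card E : ℝ) * r) := by
      intro r
      simp [Finset.sum_const, Finset.card_univ]
    have hP'sub : IsSubDist P' := by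
      constructor
      · intro x; exact ht0.le
      · calc (∑ x : A × E, P' x) = ∑ a : A, ∑ e : E, t := by
              simp only [Fintype.sum_prod_type, hP'def]
          _ = (Fintype.card A : ℝ) * ((Fintype.card E : ℝ) * t) := hsum t
          _ = δ := by rw [htdef]; field_simp
          _ ≤ 1 := hδ1
    have hl1 : l1 P P' = δ := by
      rw [l1]
      have : ∀ a e, |P (a, e) - P' (a, e)| = t := by
        intro a e
        rw [hP0 (a, e), hP'def]
        simp [abs_of_nonneg ht0.le]
      calc (∑ a, ∑ e, |P (a, e) - P' (a, e)|) = ∑ _a : A, ∑ _e : E, t := by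
            exact Finset.sum_congr rfl fun a _ => Finset.sum_congr rfl fun e _ => this a e
        _ = (Fintype.card A : ℝ) * ((Fintype.card E : ℝ) * t) := hsum t
        _ = δ := by rw [htdef]; field_simp
    have hSval : (∑ a : A, ∑ e : E, P' (a, e) ^ 2 / Qu e) = δ ^ 2 / (Fintype.card A : ℝ) := by
      have : ∀ (a : A) (e : E), P' (a, e) ^ 2 / Qu e = t ^ 2 * (Fintype.card E : ℝ) := by
        intro a e
        rw [hP'def, hQudef]
        field_simp
      calc (∑ a : A, ∑ e : E, P' (a, e) ^ 2 / Qu e)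
          = ∑ _a : A, ∑ _e : E, t ^ 2 * (Fintype.card E : ℝ) := by
            exact Finset.sum_congr rfl fun a _ => Finset.sum_congr rfl fun e _ => this a e
        _ = (Fintype.card A : ℝ) * ((Fintype.card E : ℝ) * (t ^ 2 * (Fintype.card E : ℝ))) :=
            hsum _
        _ = δ ^ 2 / (Fintype.card A : ℝ) := by
            rw [htdef]; field_simp
    have hexp : Real.exp (-H2cond P' Qu / 2) ≤ δ := by
      have hh : -H2cond P' Qu / 2 = Real.log (δ ^ 2 / (Fintype.card A : ℝ)) / 2 := by
        rw [H2cond, hSval]; ring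
      rw [hh]
      have hlog : Real.log (δ ^ 2 / (Fintype.card A : ℝ)) ≤ 2 * Real.log δ := by
        calc Real.log (δ ^ 2 / (Fintype.card A : ℝ)) ≤ Real.log (δ ^ 2) := by
              refine Real.log_le_log (by positivity) ?_
              rw [div_le_iff₀ hcA]
              nlinarith [sq_nonneg δ]
          _ = 2 * Real.log δ := by
              rw [Real.log_pow]; push_cast; ring
      calc Real.exp (Real.log (δ ^ 2 / (Fintype.card A : ℝ)) / 2)
          ≤ Real.exp (2 * Real.log δ / 2) := by
            exact Real.exp_le_exp.2 (by linarith)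
        _ = δ := by
            rw [show 2 * Real.log δ / 2 = Real.log δ by ring, Real.exp_log hδ0]
    have hmem : (2 * l1 P P' + Real.sqrt ε * Real.sqrt M * Real.exp (-H2cond P' Qu / 2)) ∈
        {x | ∃ (Q : E → ℝ) (P'' : A × E → ℝ), IsDist Q ∧ (∀ e, 0 < Q e) ∧ IsSubDist P'' ∧
          x = 2 * l1 P P'' + Real.sqrt ε * Real.sqrt M * Real.exp (-H2cond P'' Q / 2)} :=
      ⟨Qu, P', hQuD, hQupos, hP'sub, rfl⟩
    have hle : Delta_d2 M ε P ≤
        2 * l1 P P' + Real.sqrt ε * Real.sqrt M * Real.exp (-H2cond P' Qu / 2) :=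
      csInf_le hbdd hmem
    refine le_trans hle ?_
    have h2 : Real.sqrt ε * Real.sqrt M * Real.exp (-H2cond P' Qu / 2)
        ≤ Real.sqrt ε * Real.sqrt M * δ := by
      refine mul_le_mul_of_nonneg_left hexp (by positivity)
    calc 2 * l1 P P' + Real.sqrt ε * Real.sqrt M * Real.exp (-H2cond P' Qu / 2)
        ≤ 2 * δ + Real.sqrt ε * Real.sqrt M * δ := by rw [hl1]; linarith
      _ = δ * K := by rw [hKdef]; ring
      _ ≤ R := hδK

end Hayashi
end

section
/- Let P_{A,E} be a normalized joint distribution on 𝒜 × ℰ, M ≥ 3, ε > 0, and s ∈ (0, 1] such that M^s·e^{−s·H^↓_{1+s}(A|E|P_{A,E})} ≤ 1. Then Δ_{I,2}(M,ε|P_{A,E}) ≤ η(M^s·e^{−s·H^↓_{1+s}(A|E|P_{A,E})}, ε + log M). -/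
open Real Finset Filter

attribute [local instance] Classical.propDecidable

namespace Hayashi

variable {A E : Type*} [Fintype A] [Fintype E]

lemma neg_mul_log_le {x : ℝ} (hx : 0 < x) : -x * Real.log x ≤ 1 - x := by
  have h := Real.log_le_sub_one_of_pos (show (0:ℝ) < x⁻¹ by positivity)
  rw [Real.log_inv] at h
  have h2 := mul_le_mul_of_nonneg_left h hx.le
  have hxi : x * x⁻¹ = 1 := mul_inv_cancel₀ hx.ne'
  nlinarith

lemma eta_mono {t v y : ℝ} (ht : 0 ≤ t) (htv : t ≤ v) (hv1 : v ≤ 1) (hy : 1 ≤ y) :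
    eta t y ≤ eta v y := by
  rcases eq_or_lt_of_le ht with h0 | h0
  · have hv0 : 0 ≤ v := ht.trans htv
    have hlv : Real.log v ≤ 0 := by
      rcases eq_or_lt_of_le hv0 with h | h
      · simp [← h]
      · exact Real.log_nonpos h.le hv1
    simp only [eta, ← h0]
    nlinarith
  · have hv0 : 0 < v := lt_of_lt_of_le h0 htv
    have hlv : Real.log v ≤ 0 := Real.log_nonpos hv0.le hv1
    have key : Real.log v - Real.log t ≤ v / t - 1 := by
      have := Real.log_le_sub_one_of_pos (div_pos hv0 h0)
      rwa [Real.log_div hv0.ne' h0.ne'] at this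
    have key2 : t * (Real.log v - Real.log t) ≤ v - t := by
      have := mul_le_mul_of_nonneg_left key h0.le
      have ht' : t * (v / t - 1) = v - t := by field_simp
      linarith [ht' ▸ this]
    simp only [eta]
    nlinarith [mul_nonneg (sub_nonneg.2 htv) (by linarith : 0 ≤ y - 1 - Real.log v)]


set_option maxHeartbeats 2000000 in
/-- Theorem `Lem12` of the paper:
`Δ_{I,2}(M,ε|P) ≤ η(M^s·e^{-s·H^↓_{1+s}(A|E|P)}, ε + log M)` for `s ∈ (0,1]`. -/
theorem statement12 {A E : Type*} [Fintype A] [Fintype E] [Nonempty A] [Nonempty E]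
    (P : A × E → ℝ) (hP : IsDist P)
    (M ε s : ℝ) (hM : 3 ≤ M) (hε : 0 < ε) (hs : s ∈ Set.Ioc (0 : ℝ) 1)
    (hsmall : M ^ s * Real.exp (-(s * condRenyiDown P s)) ≤ 1) :
    Delta_I2 M ε P ≤
      eta (M ^ s * Real.exp (-(s * condRenyiDown P s))) (ε + Real.log M) := by
  obtain ⟨hs0, hs1⟩ := hs
  have hM0 : (0:ℝ) < M := by linarith
  have hP0 := hP.1
  have hPsum := hP.2
  have hlogM1 : 1 ≤ Real.log M := by
    rw [Real.le_log_iff_exp_le hM0]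
    have h3 : (2.7182818286:ℝ) ≤ 3 := by norm_num
    exact le_trans Real.exp_one_lt_d9.le (by linarith)
  have hlogM0 : 0 ≤ Real.log M := by linarith
  set Q : E → ℝ := margE P with hQdef
  have hQ0 : ∀ e, 0 ≤ Q e := fun e => Finset.sum_nonneg fun a _ => hP0 _
  have hPQ : ∀ a e, P (a, e) ≤ Q e := fun a e =>
    Finset.single_le_sum (fun a _ => hP0 (a, e)) (Finset.mem_univ a)
  have hsum2 : ∑ a, ∑ e, P (a, e) = 1 := by
    rw [← Fintype.sum_prod_type]; exact hPsum
  have hQsum : ∑ e, Q e = 1 := by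
    simp only [hQdef, margE]; rw [Finset.sum_comm]; exact hsum2
  set S : ℝ := ∑ a, ∑ e, P (a, e) ^ (1 + s) * Q e ^ (-s) with hSdef
  have hterm0 : ∀ a e, 0 ≤ P (a, e) ^ (1 + s) * Q e ^ (-s) := fun a e =>
    mul_nonneg (Real.rpow_nonneg (hP0 _) _) (Real.rpow_nonneg (hQ0 _) _)
  obtain ⟨x0, hx0⟩ : ∃ x : A × E, 0 < P x := by
    by_contra h
    push_neg at h
    have : ∑ x, P x = 0 := Finset.sum_eq_zero fun x _ => le_antisymm (h x) (hP0 x)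
    rw [hPsum] at this; norm_num at this
  have hx0' : 0 < P (x0.1, x0.2) := by simpa using hx0
  have hq0' : 0 < Q x0.2 := lt_of_lt_of_le hx0' (hPQ x0.1 x0.2)
  have hS_pos : 0 < S := by
    rw [hSdef]
    refine Finset.sum_pos' (fun a _ => Finset.sum_nonneg fun e _ => hterm0 a e)
      ⟨x0.1, Finset.mem_univ _, Finset.sum_pos' (fun e _ => hterm0 _ e)
        ⟨x0.2, Finset.mem_univ _, ?_⟩⟩
    exact mul_pos (Real.rpow_pos_of_pos hx0' _) (Real.rpow_pos_of_pos hq0' _)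
  have hv_eq : M ^ s * Real.exp (-(s * condRenyiDown P s)) = M ^ s * S := by
    congr 1
    have hcrd : condRenyiDown P s = (-1/s) * Real.log S := by
      simp only [condRenyiDown, condRenyi, hSdef]
      congr 2
      refine Finset.sum_congr rfl fun a _ => Finset.sum_congr rfl fun e _ => ?_
      congr 2
      simp only [margNorm]
      rw [show (∑ e', margE P e') = 1 from hQsum, div_one]
    rw [hcrd, show -(s * (-1/s * Real.log S)) = Real.log S by field_simp]
    exact Real.exp_log hS_pos
  set v : ℝ := M ^ s * S with hvdef
  have hMs0 : 0 < (M:ℝ) ^ s := Real.rpow_pos_of_pos hM0 s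
  have hv0 : 0 < v := mul_pos hMs0 hS_pos
  have hv1 : v ≤ 1 := hv_eq ▸ hsmall
  rw [hv_eq]
  -- the thresholded sub-distribution
  set P' : A × E → ℝ := fun x => if M * P x ≤ Q x.2 then P x else 0 with hP'def
  have hP'le : ∀ x, P' x ≤ P x := by
    intro x; simp only [hP'def]; split
    · exact le_refl _
    · exact hP0 x
  have hP'nn : ∀ x, 0 ≤ P' x := by
    intro x; simp only [hP'def]; split
    · exact hP0 x
    · exact le_refl _
  -- key pointwise rewrite
  have hrw : ∀ a e, 0 < P (a, e) → 0 < Q e →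
      M ^ s * (P (a, e) ^ (1 + s) * Q e ^ (-s)) = (M * P (a, e) / Q e) ^ s * P (a, e) := by
    intro a e hp hq
    rw [Real.div_rpow (by positivity) (hQ0 e), Real.mul_rpow hM0.le hp.le,
      Real.rpow_add hp, Real.rpow_one, Real.rpow_neg (hQ0 e)]
    ring
  have claim1 : ∀ a e, P (a, e) - P' (a, e) ≤ M ^ s * (P (a, e) ^ (1 + s) * Q e ^ (-s)) := by
    intro a e
    by_cases h : M * P (a, e) ≤ Q (a, e).2
    · simp only [hP'def, if_pos h, sub_self]
      exact mul_nonneg hMs0.le (hterm0 a e)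
    · have hne : ¬ M * P (a, e) ≤ Q e := h
      push_neg at hne
      have hp : 0 < P (a, e) := by
        rcases (hP0 (a, e)).lt_or_eq with h' | h'
        · exact h'
        · exfalso; rw [← h'] at hne; nlinarith [hQ0 e]
      have hq : 0 < Q e := lt_of_lt_of_le hp (hPQ a e)
      have hr1 : (1:ℝ) ≤ M * P (a, e) / Q e := (one_le_div hq).2 hne.le
      have h1 : (1:ℝ) ≤ (M * P (a, e) / Q e) ^ s := by
        calc (1:ℝ) = 1 ^ s := (Real.one_rpow s).symm
        _ ≤ _ := Real.rpow_le_rpow zero_le_one hr1 hs0.le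
      rw [hrw a e hp hq]
      simp only [hP'def, if_neg h, sub_zero]
      nlinarith
  have claim2 : ∀ a e, M * (P' (a, e) ^ 2 / Q e) ≤ M ^ s * (P (a, e) ^ (1 + s) * Q e ^ (-s)) := by
    intro a e
    have hR0 : 0 ≤ M ^ s * (P (a, e) ^ (1 + s) * Q e ^ (-s)) := mul_nonneg hMs0.le (hterm0 a e)
    by_cases h : M * P (a, e) ≤ Q (a, e).2
    · rcases (hP0 (a, e)).lt_or_eq with hp | hp
      · have hq : 0 < Q e := lt_of_lt_of_le hp (hPQ a e)
        have hr0 : 0 < M * P (a, e) / Q e := by positivity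
        have hr1 : M * P (a, e) / Q e ≤ 1 := (div_le_one hq).2 h
        have hrs : M * P (a, e) / Q e ≤ (M * P (a, e) / Q e) ^ s := by
          have := Real.rpow_le_rpow_of_exponent_ge hr0 hr1 hs1
          rwa [Real.rpow_one] at this
        rw [hrw a e hp hq]
        simp only [hP'def, if_pos h]
        have hLHS : M * (P (a, e) ^ 2 / Q e) = (M * P (a, e) / Q e) * P (a, e) := by
          field_simp
        rw [hLHS]
        exact mul_le_mul_of_nonneg_right hrs hp.le
      · have h0 : P (a, e) = 0 := hp.symm
        rw [h0] at hR0
        simp only [hP'def, if_pos h, h0]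
        simpa using hR0
    · simp only [hP'def, if_neg h]
      simpa using hR0
  have hsumv : ∑ a, ∑ e, M ^ s * (P (a, e) ^ (1 + s) * Q e ^ (-s)) = v := by
    rw [hvdef, hSdef, Finset.mul_sum]
    exact Finset.sum_congr rfl fun a _ => (Finset.mul_sum _ _ _).symm
  have ht_le : ∑ a, ∑ e, (P (a, e) - P' (a, e)) ≤ v := by
    rw [← hsumv]
    exact Finset.sum_le_sum fun a _ => Finset.sum_le_sum fun e _ => claim1 a e
  have hS'_le : M * (∑ a, ∑ e, P' (a, e) ^ 2 / Q e) ≤ v := by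
    rw [← hsumv, Finset.mul_sum]
    refine Finset.sum_le_sum fun a _ => ?_
    rw [Finset.mul_sum]
    exact Finset.sum_le_sum fun e _ => claim2 a e
  -- bounded below by 0
  have hbdd : BddBelow {x | ∃ Pp : A × E → ℝ, IsSubDist Pp ∧ (∀ e, margE Pp e ≤ margE P e) ∧
      x = eta (l1 P Pp) (Real.log M) + ε * M * Real.exp (-H2cond Pp (margE P))} := by
    refine ⟨0, ?_⟩
    rintro x ⟨Pp, hsub, hm, rfl⟩
    have h2 : 0 ≤ ε * M * Real.exp (-H2cond Pp (margE P)) := by positivity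
    have ht0 : 0 ≤ l1 P Pp :=
      Finset.sum_nonneg fun a _ => Finset.sum_nonneg fun e _ => abs_nonneg _
    have ht2 : l1 P Pp ≤ 2 := by
      have habs : ∀ a e, |P (a, e) - Pp (a, e)| ≤ P (a, e) + Pp (a, e) := by
        intro a e
        have h1 := hP0 (a, e)
        have h2 := hsub.1 (a, e)
        rw [abs_le]; constructor <;> linarith
      have hPp1 : ∑ a, ∑ e, Pp (a, e) ≤ 1 := by
        rw [← Fintype.sum_prod_type]; exact hsub.2
      calc l1 P Pp ≤ ∑ a, ∑ e, (P (a, e) + Pp (a, e)) :=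
            Finset.sum_le_sum fun a _ => Finset.sum_le_sum fun e _ => habs a e
        _ = (∑ a, ∑ e, P (a, e)) + ∑ a, ∑ e, Pp (a, e) := by
            simp [Finset.sum_add_distrib]
        _ ≤ 1 + 1 := by rw [hsum2]; linarith
        _ = 2 := by norm_num
    have heta0 : 0 ≤ eta (l1 P Pp) (Real.log M) := by
      rcases eq_or_lt_of_le ht0 with h | h
      · simp [eta, ← h]
      · have hlt : Real.log (l1 P Pp) ≤ Real.log M :=
          Real.log_le_log h (by linarith)
        simp only [eta]; nlinarith
    linarith
  set T : ℝ := ∑ a, ∑ e, P' (a, e) ^ 2 / Q e with hTdef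
  have hT0 : 0 ≤ T :=
    Finset.sum_nonneg fun a _ => Finset.sum_nonneg fun e _ =>
      div_nonneg (sq_nonneg _) (hQ0 _)
  have hsub' : IsSubDist P' := by
    refine ⟨hP'nn, ?_⟩
    calc ∑ x, P' x ≤ ∑ x, P x := Finset.sum_le_sum fun x _ => hP'le x
      _ = 1 := hPsum
  have hm' : ∀ e, margE P' e ≤ margE P e := fun e =>
    Finset.sum_le_sum fun a _ => hP'le (a, e)
  rcases eq_or_lt_of_le hT0 with hT | hT
  · -- degenerate case : T = 0, so v = 1
    have hP'z : ∀ a e, P' (a, e) = 0 := by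
      intro a e
      by_contra hne
      have h1 : 0 < P' (a, e) := lt_of_le_of_ne (hP'nn _) (Ne.symm hne)
      have hq : 0 < Q e := lt_of_lt_of_le h1 (le_trans (hP'le _) (hPQ a e))
      have hpos : 0 < P' (a, e) ^ 2 / Q e := by positivity
      have hTpos : 0 < T := by
        rw [hTdef]
        refine Finset.sum_pos'
          (fun a _ => Finset.sum_nonneg fun e _ => div_nonneg (sq_nonneg _) (hQ0 _))
          ⟨a, Finset.mem_univ _, Finset.sum_pos'
            (fun e _ => div_nonneg (sq_nonneg _) (hQ0 _)) ⟨e, Finset.mem_univ _, hpos⟩⟩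
      rw [← hT] at hTpos
      exact lt_irrefl 0 hTpos
    have hsum1 : ∑ a, ∑ e, (P (a, e) - P' (a, e)) = 1 := by
      calc ∑ a, ∑ e, (P (a, e) - P' (a, e)) = ∑ a, ∑ e, P (a, e) :=
            Finset.sum_congr rfl fun a _ => Finset.sum_congr rfl fun e _ => by
              rw [hP'z a e, sub_zero]
        _ = 1 := hsum2
    have hveq : v = 1 := le_antisymm hv1 (by rw [hsum1] at ht_le; exact ht_le)
    rw [hveq, show eta 1 (ε + Real.log M) = ε + Real.log M by simp [eta]]
    -- construct the tiny sub-distribution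
    have hq1 : Q x0.2 ≤ 1 := by
      rw [← hQsum]; exact Finset.single_le_sum (fun e _ => hQ0 e) (Finset.mem_univ _)
    set c : ℝ := min (P (x0.1, x0.2)) (min (ε / 2) (Q x0.2 / (2 * M))) with hcdef
    have hc0 : 0 < c := lt_min hx0' (lt_min (by linarith) (by positivity))
    have hcp : c ≤ P (x0.1, x0.2) := min_le_left _ _
    have hcε : c ≤ ε / 2 := le_trans (min_le_right _ _) (min_le_left _ _)
    have hcq : c ≤ Q x0.2 / (2 * M) := le_trans (min_le_right _ _) (min_le_right _ _)
    have hc6 : c ≤ 1 / 6 := by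
      refine le_trans hcq ?_
      rw [div_le_iff₀ (by positivity)]
      nlinarith
    have hc1 : c < 1 := by linarith
    set P'' : A × E → ℝ := fun x => if x = x0 then c else 0 with hP''def
    have hP''le : ∀ x, P'' x ≤ P x := by
      intro x; simp only [hP''def]; split
      · rename_i h; subst h; simpa using hcp
      · exact hP0 x
    have hP''nn : ∀ x, 0 ≤ P'' x := by
      intro x; simp only [hP''def]; split
      · exact hc0.le
      · exact le_refl _
    have hP''sum : ∑ x, P'' x = c := by
      simp only [hP''def]
      rw [Finset.sum_ite_eq' Finset.univ x0 (fun _ => c)]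
      simp
    have hsub'' : IsSubDist P'' := by
      refine ⟨hP''nn, ?_⟩
      rw [hP''sum]
      have : P (x0.1, x0.2) ≤ Q x0.2 := hPQ x0.1 x0.2
      linarith
    have hm'' : ∀ e, margE P'' e ≤ margE P e := fun e =>
      Finset.sum_le_sum fun a _ => hP''le (a, e)
    have hl1'' : l1 P P'' = 1 - c := by
      have hPsum'' : ∑ a, ∑ e, P'' (a, e) = c := by
        rw [← Fintype.sum_prod_type]; exact hP''sum
      calc l1 P P'' = ∑ a, ∑ e, (P (a, e) - P'' (a, e)) :=
            Finset.sum_congr rfl fun a _ => Finset.sum_congr rfl fun e _ =>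
              abs_of_nonneg (sub_nonneg.2 (hP''le (a, e)))
        _ = (∑ a, ∑ e, P (a, e)) - ∑ a, ∑ e, P'' (a, e) := by
            simp [Finset.sum_sub_distrib]
        _ = 1 - c := by rw [hsum2, hPsum'']
    have hT'' : ∑ a, ∑ e, P'' (a, e) ^ 2 / Q e = c ^ 2 / Q x0.2 := by
      have hterm : ∀ x : A × E, P'' x ^ 2 / Q x.2 = if x = x0 then c ^ 2 / Q x0.2 else 0 := by
        intro x; simp only [hP''def]; split
        · rename_i h; subst h; rfl
        · simp
      calc ∑ a, ∑ e, P'' (a, e) ^ 2 / Q e = ∑ x : A × E, P'' x ^ 2 / Q x.2 := by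
            rw [Fintype.sum_prod_type (f := fun x : A × E => P'' x ^ 2 / Q x.2)]
        _ = ∑ x : A × E, (if x = x0 then c ^ 2 / Q x0.2 else 0) :=
            Finset.sum_congr rfl fun x _ => hterm x
        _ = c ^ 2 / Q x0.2 := by
            rw [Finset.sum_ite_eq' Finset.univ x0 (fun _ => c ^ 2 / Q x0.2)]; simp
    have hexp'' : Real.exp (-H2cond P'' (margE P)) = c ^ 2 / Q x0.2 := by
      simp only [H2cond, neg_neg]
      rw [show (∑ a, ∑ e, P'' (a, e) ^ 2 / margE P e) = c ^ 2 / Q x0.2 from hT'']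
      exact Real.exp_log (by positivity)
    refine le_trans (csInf_le hbdd ⟨P'', hsub'', hm'', rfl⟩) ?_
    rw [hexp'', hl1'']
    have h1c : (0:ℝ) < 1 - c := by linarith
    have hnml := neg_mul_log_le h1c
    have h4 : M * (c ^ 2 / Q x0.2) ≤ 1 / 2 := by
      have hcq' : c * (2 * M) ≤ Q x0.2 := (le_div_iff₀ (by positivity)).1 hcq
      rw [← mul_div_assoc, div_le_iff₀ hq0']
      nlinarith
    have h5 : ε * M * (c ^ 2 / Q x0.2) ≤ ε / 2 := by
      have := mul_le_mul_of_nonneg_left h4 hε.le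
      nlinarith
    have h6 : (1 - c) * Real.log M ≤ Real.log M := by nlinarith
    simp only [eta]
    linarith
  · -- main case : T > 0
    have hexp' : Real.exp (-H2cond P' (margE P)) = T := by
      simp only [H2cond, neg_neg]
      rw [← hTdef]
      exact Real.exp_log hT
    refine le_trans (csInf_le hbdd ⟨P', hsub', hm', rfl⟩) ?_
    rw [hexp']
    have hl1' : l1 P P' = ∑ a, ∑ e, (P (a, e) - P' (a, e)) :=
      Finset.sum_congr rfl fun a _ => Finset.sum_congr rfl fun e _ =>
        abs_of_nonneg (sub_nonneg.2 (hP'le (a, e)))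
    have ht0' : 0 ≤ l1 P P' :=
      Finset.sum_nonneg fun a _ => Finset.sum_nonneg fun e _ => abs_nonneg _
    have e1 : eta (l1 P P') (Real.log M) ≤ eta v (Real.log M) :=
      eta_mono ht0' (by rw [hl1']; exact ht_le) hv1 hlogM1
    have e2 : ε * M * T ≤ ε * v := by nlinarith
    calc eta (l1 P P') (Real.log M) + ε * M * T ≤ eta v (Real.log M) + ε * v :=
          add_le_add e1 e2
      _ = eta v (ε + Real.log M) := by simp only [eta]; ring

end Hayashi
end

section
/- Let ε > 0 and M ≥ 1. For every joint sub-distribution P_{A,E} on 𝒜 × ℰ, Δ_{d,min}(M,ε|P_{A,E}) ≤ (2 + √ε)·inf_{s ≥ 0} exp((−s·H^↑_{1+s}(A|E|P_{A,E}) + s·log M)/(1 + 2s)). Moreover, if P_{A,E} is a normalized joint distribution and M ≥ 3, then Δ_{I,min}(M,ε|P_{A,E}) ≤ η(inf_{s ≥ 0} exp((−s·H^↓_{1+s}(A|E|P_{A,E}) + s·log M)/(1 + s)), ε + log M). (In both infima the s = 0 term is read as 1.) -/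
open Real Finset Filter

attribute [local instance] Classical.propDecidable

namespace Hayashi

variable {A E : Type*} [Fintype A] [Fintype E]

lemma double_sum_pos {f : A × E → ℝ} (h0 : ∀ p, 0 ≤ f p) {p₀ : A × E} (hp : 0 < f p₀) :
    0 < ∑ a, ∑ e, f (a, e) := by
  rw [← Fintype.sum_prod_type]
  exact Finset.sum_pos' (fun i _ => h0 i) ⟨p₀, Finset.mem_univ _, hp⟩

lemma single_le_double_sum {f : A × E → ℝ} (h0 : ∀ p, 0 ≤ f p) (p₀ : A × E) :
    f p₀ ≤ ∑ a, ∑ e, f (a, e) := by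
  rw [← Fintype.sum_prod_type]
  exact Finset.single_le_sum (fun i _ => h0 i) (Finset.mem_univ _)

lemma cut_bound {s c q p : ℝ} (hs : 0 ≤ s) (hc : 0 < c) (hq : 0 ≤ q) (hp : 0 ≤ p)
    (h' : c * q < p → 0 < q) :
    p - min p (c * q) ≤ c ^ (-s) * (p ^ (1 + s) * q ^ (-s)) := by
  rcases le_or_gt p (c * q) with h | h
  · rw [min_eq_left h]
    have : (0:ℝ) ≤ c ^ (-s) * (p ^ (1 + s) * q ^ (-s)) := by positivity
    linarith
  · have hq0 : 0 < q := h' h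
    have hcq : 0 < c * q := by positivity
    have hp0 : 0 < p := lt_trans hcq h
    rw [min_eq_right h.le]
    have key : c ^ (-s) * (p ^ (1 + s) * q ^ (-s)) = p * (p / (c * q)) ^ s := by
      rw [Real.rpow_add hp0, Real.rpow_one, Real.div_rpow hp hcq.le,
        Real.mul_rpow hc.le hq, Real.rpow_neg hc.le, Real.rpow_neg hq]
      have h1 : c ^ s ≠ 0 := (Real.rpow_pos_of_pos hc s).ne'
      have h2 : q ^ s ≠ 0 := (Real.rpow_pos_of_pos hq0 s).ne'
      field_simp
    rw [key]
    have h1 : (1:ℝ) ≤ (p / (c * q)) ^ s := Real.one_le_rpow ((one_le_div hcq).2 h.le) hs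
    nlinarith

lemma eta_mono_s13 {a b y : ℝ} (ha : 0 ≤ a) (hab : a ≤ b) (hb : b ≤ Real.exp (y - 1)) :
    eta a y ≤ eta b y := by
  unfold eta
  rcases eq_or_lt_of_le ha with rfl | ha0
  · simp only [Real.log_zero, neg_zero, zero_mul, mul_zero, add_zero, zero_add]
    rcases eq_or_lt_of_le hab with rfl | hb0
    · simp
    · have h3 : Real.log b ≤ y - 1 := by
        calc Real.log b ≤ Real.log (Real.exp (y - 1)) := Real.log_le_log hb0 hb
        _ = y - 1 := Real.log_exp _
      nlinarith
  · have hb0 : 0 < b := lt_of_lt_of_le ha0 hab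
    have h1 : Real.log (b / a) ≤ b / a - 1 := Real.log_le_sub_one_of_pos (by positivity)
    have h2 : Real.log (b / a) = Real.log b - Real.log a := Real.log_div hb0.ne' ha0.ne'
    have h3 : Real.log b ≤ y - 1 := by
      calc Real.log b ≤ Real.log (Real.exp (y - 1)) := Real.log_le_log hb0 hb
      _ = y - 1 := Real.log_exp _
    have h4 : a * (b / a) = b := by field_simp
    have f1 : a * Real.log b - a * Real.log a ≤ b - a := by
      nlinarith [mul_le_mul_of_nonneg_left h1 ha0.le]
    have f2 : (b - a) * Real.log b ≤ (b - a) * (y - 1) :=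
      mul_le_mul_of_nonneg_left h3 (by linarith)
    nlinarith [f1, f2]
lemma lemA (M ε : ℝ) (hM : 1 ≤ M) (hε : 0 < ε)
    (P : A × E → ℝ) (hP : IsSubDist P) {s : ℝ} (hs : 0 ≤ s)
    (Q : E → ℝ) (hQ : IsDist Q) (hQpos : ∀ e, 0 < Q e)
    (hT : 0 < ∑ a, ∑ e, P (a, e) ^ (1 + s) * Q e ^ (-s)) :
    Delta_dmin M ε P ≤ (2 + Real.sqrt ε) *
      ((∑ a, ∑ e, P (a, e) ^ (1 + s) * Q e ^ (-s)) * M ^ s) ^ (1 / (1 + 2 * s)) := by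
  have hM0 : (0:ℝ) < M := lt_of_lt_of_le one_pos hM
  set T := ∑ a, ∑ e, P (a, e) ^ (1 + s) * Q e ^ (-s) with hTdef
  set K := (T * M ^ s) ^ (1 / (1 + 2 * s)) with hKdef
  have h12s : (0:ℝ) < 1 + 2 * s := by linarith
  have hTM : 0 < T * M ^ s := mul_pos hT (Real.rpow_pos_of_pos hM0 s)
  have hK : 0 < K := Real.rpow_pos_of_pos hTM _
  have hKpow : K ^ (1 + 2 * s) = T * M ^ s := by
    rw [hKdef, ← Real.rpow_mul hTM.le, one_div_mul_cancel h12s.ne', Real.rpow_one]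
  set c := K ^ (2:ℝ) / M with hcdef
  have hc : 0 < c := div_pos (Real.rpow_pos_of_pos hK 2) hM0
  set P' : A × E → ℝ := fun p => min (P p) (c * Q p.2) with hP'def
  have hP'nonneg : ∀ p, 0 ≤ P' p := fun p => le_min (hP.1 p) (mul_nonneg hc.le (hQpos p.2).le)
  have hP'le : ∀ p, P' p ≤ P p := fun p => min_le_left _ _
  have hP'sub : IsSubDist P' :=
    ⟨hP'nonneg, le_trans (Finset.sum_le_sum fun p _ => hP'le p) hP.2⟩
  have hl1 : l1 P P' ≤ c ^ (-s) * T := by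
    have h : l1 P P' ≤ ∑ a, ∑ e, c ^ (-s) * (P (a, e) ^ (1 + s) * Q e ^ (-s)) := by
      unfold l1
      refine Finset.sum_le_sum fun a _ => Finset.sum_le_sum fun e _ => ?_
      rw [abs_of_nonneg (sub_nonneg.2 (hP'le (a, e)))]
      exact cut_bound hs hc (hQpos e).le (hP.1 (a, e)) (fun _ => hQpos e)
    calc l1 P P' ≤ ∑ a, ∑ e, c ^ (-s) * (P (a, e) ^ (1 + s) * Q e ^ (-s)) := h
      _ = c ^ (-s) * T := by rw [hTdef, Finset.mul_sum]; exact Finset.sum_congr rfl fun a _ => by rw [Finset.mul_sum]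
  obtain ⟨⟨a₀, e₀⟩, hp₀⟩ : ∃ p₀ : A × E, 0 < P p₀ := by
    by_contra hcon
    push_neg at hcon
    have hz : ∀ p : A × E, P p = 0 := fun p => le_antisymm (hcon p) (hP.1 p)
    have hT0 : T = 0 := by
      rw [hTdef]
      apply Finset.sum_eq_zero; intro a _; apply Finset.sum_eq_zero; intro e _
      rw [hz (a, e), Real.zero_rpow (by linarith : (1:ℝ) + s ≠ 0), zero_mul]
    exact absurd hT0 hT.ne'
  set S := {r | ∃ a e, 0 < Q e ∧ r = P' (a, e) / Q e} with hSdef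
  have hmemS : P' (a₀, e₀) / Q e₀ ∈ S := ⟨a₀, e₀, hQpos _, rfl⟩
  have hSub : ∀ r ∈ S, r ≤ c := by
    rintro r ⟨a, e, hQe, rfl⟩
    rw [div_le_iff₀ hQe]
    exact min_le_right _ _
  have hbdd : BddAbove S := ⟨c, hSub⟩
  have hm_pos : 0 < sSup S := by
    refine lt_of_lt_of_le ?_ (le_csSup hbdd hmemS)
    have h1 : 0 < P' (a₀, e₀) := lt_min hp₀ (mul_pos hc (hQpos e₀))
    exact div_pos h1 (hQpos e₀)
  have hm_le : sSup S ≤ c := csSup_le ⟨_, hmemS⟩ hSub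
  have hHmin : Real.exp (-Hmin P' Q / 2) ≤ Real.sqrt c := by
    have hq : Hmin P' Q = -Real.log (sSup S) := rfl
    rw [hq]
    have hlg : Real.log (sSup S) ≤ Real.log c := Real.log_le_log hm_pos hm_le
    calc Real.exp (- -Real.log (sSup S) / 2) ≤ Real.exp (Real.log c * (1 / 2)) :=
        Real.exp_le_exp.2 (by linarith)
      _ = Real.sqrt c := by rw [Real.sqrt_eq_rpow, Real.rpow_def_of_pos hc]
  have hbddB : BddBelow {x | ∃ (Q : E → ℝ) (P' : A × E → ℝ), IsDist Q ∧ (∀ e, 0 < Q e) ∧ IsSubDist P' ∧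
      x = 2 * l1 P P' + Real.sqrt ε * Real.sqrt M * Real.exp (-Hmin P' Q / 2)} := by
    refine ⟨0, ?_⟩
    rintro x ⟨Q', P'', _, _, _, rfl⟩
    have h1 : 0 ≤ l1 P P'' := by
      unfold l1; exact Finset.sum_nonneg fun a _ => Finset.sum_nonneg fun e _ => abs_nonneg _
    have h2 : (0:ℝ) ≤ Real.sqrt ε * Real.sqrt M * Real.exp (-Hmin P'' Q' / 2) := by positivity
    linarith
  have hDelta : Delta_dmin M ε P ≤
      2 * l1 P P' + Real.sqrt ε * Real.sqrt M * Real.exp (-Hmin P' Q / 2) :=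
    csInf_le hbddB ⟨Q, P', hQ, hQpos, hP'sub, rfl⟩
  have harith1 : c ^ (-s) * T = K := by
    rw [hcdef, Real.div_rpow (Real.rpow_nonneg hK.le 2) hM0.le, ← Real.rpow_mul hK.le,
      Real.rpow_neg hM0.le, div_eq_mul_inv, inv_inv, mul_assoc, mul_comm (M ^ s) T, ← hKpow,
      ← Real.rpow_add hK]
    rw [show 2 * -s + (1 + 2 * s) = 1 by ring, Real.rpow_one]
  have harith2 : Real.sqrt M * Real.sqrt c = K := by
    rw [← Real.sqrt_mul hM0.le, hcdef]
    rw [show M * (K ^ (2:ℝ) / M) = K ^ (2:ℝ) by field_simp]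
    rw [show K ^ (2:ℝ) = K ^ 2 by rw [← Real.rpow_natCast K 2]; norm_num]
    exact Real.sqrt_sq hK.le
  have step2 : Real.sqrt ε * Real.sqrt M * Real.exp (-Hmin P' Q / 2) ≤ Real.sqrt ε * K := by
    calc Real.sqrt ε * Real.sqrt M * Real.exp (-Hmin P' Q / 2)
        ≤ Real.sqrt ε * Real.sqrt M * Real.sqrt c := by
          apply mul_le_mul_of_nonneg_left hHmin (by positivity)
      _ = Real.sqrt ε * K := by rw [mul_assoc, harith2]
  have step1 : 2 * l1 P P' ≤ 2 * K := by rw [← harith1]; linarith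
  calc Delta_dmin M ε P ≤ 2 * l1 P P' + Real.sqrt ε * Real.sqrt M * Real.exp (-Hmin P' Q / 2) := hDelta
    _ ≤ 2 * K + Real.sqrt ε * K := by linarith
    _ = (2 + Real.sqrt ε) * K := by ring
lemma Ddmin_bdd (M ε : ℝ) (P : A × E → ℝ) :
    BddBelow {x | ∃ (Q : E → ℝ) (P' : A × E → ℝ), IsDist Q ∧ (∀ e, 0 < Q e) ∧ IsSubDist P' ∧
      x = 2 * l1 P P' + Real.sqrt ε * Real.sqrt M * Real.exp (-Hmin P' Q / 2)} := by
  refine ⟨0, ?_⟩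
  rintro x ⟨Q', P'', _, _, _, rfl⟩
  have h1 : 0 ≤ l1 P P'' :=
    Finset.sum_nonneg fun a _ => Finset.sum_nonneg fun e _ => abs_nonneg _
  have h2 : (0:ℝ) ≤ Real.sqrt ε * Real.sqrt M * Real.exp (-Hmin P'' Q' / 2) := by positivity
  linarith

lemma uniform_isDist [Nonempty E] : IsDist (fun _ : E => (Fintype.card E : ℝ)⁻¹) := by
  have hc : (0:ℝ) < (Fintype.card E : ℝ) := by
    exact_mod_cast Fintype.card_pos
  constructor
  · intro e; positivity
  · simp only [Finset.sum_const, Finset.card_univ, nsmul_eq_mul]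
    exact mul_inv_cancel₀ hc.ne'

lemma part1 [Nonempty A] [Nonempty E] (M ε : ℝ) (hM : 1 ≤ M) (hε : 0 < ε)
    (P : A × E → ℝ) (hP : IsSubDist P) :
    Delta_dmin M ε P ≤
      (2 + Real.sqrt ε) *
        sInf {x | ∃ s : ℝ, 0 ≤ s ∧
          x = Real.exp ((-(s * condRenyiUp P s) + s * Real.log M) / (1 + 2 * s))} := by
  have hM0 : (0:ℝ) < M := lt_of_lt_of_le one_pos hM
  have h2e : (0:ℝ) < 2 + Real.sqrt ε := by positivity
  set Qu : E → ℝ := fun _ => (Fintype.card E : ℝ)⁻¹ with hQudef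
  have hQu : IsDist Qu := uniform_isDist
  have hQupos : ∀ e, 0 < Qu e := fun e => by
    have hc : (0:ℝ) < (Fintype.card E : ℝ) := by exact_mod_cast Fintype.card_pos
    positivity
  set S := {x | ∃ s : ℝ, 0 ≤ s ∧
      x = Real.exp ((-(s * condRenyiUp P s) + s * Real.log M) / (1 + 2 * s))} with hSdef
  have hS1 : (1:ℝ) ∈ S := ⟨0, le_refl 0, by norm_num⟩
  suffices key : ∀ b ∈ S, Delta_dmin M ε P ≤ (2 + Real.sqrt ε) * b by
    have hle : Delta_dmin M ε P / (2 + Real.sqrt ε) ≤ sInf S :=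
      le_csInf ⟨1, hS1⟩ (fun b hb => (div_le_iff₀ h2e).2 (by rw [mul_comm]; exact key b hb))
    calc Delta_dmin M ε P = (2 + Real.sqrt ε) * (Delta_dmin M ε P / (2 + Real.sqrt ε)) := by
          field_simp
      _ ≤ (2 + Real.sqrt ε) * sInf S := mul_le_mul_of_nonneg_left hle h2e.le
  rintro b ⟨s, hs, rfl⟩
  have h12s : (0:ℝ) < 1 + 2 * s := by linarith
  by_cases hP0 : ∀ p : A × E, P p = 0
  · -- P is identically zero
    have hzero : ∀ Q : E → ℝ, condRenyi P Q s = 0 := by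
      intro Q
      unfold condRenyi
      have hsum : (∑ a, ∑ e, P (a, e) ^ (1 + s) * Q e ^ (-s)) = 0 := by
        apply Finset.sum_eq_zero; intro a _; apply Finset.sum_eq_zero; intro e _
        rw [hP0 (a, e), Real.zero_rpow (by linarith : (1:ℝ) + s ≠ 0), zero_mul]
      rw [hsum, Real.log_zero, mul_zero]
    have hRen : condRenyiUp P s = 0 := by
      unfold condRenyiUp
      have hset : {x | ∃ Q : E → ℝ, IsDist Q ∧ (∀ e, 0 < Q e) ∧ x = condRenyi P Q s} = {0} := by
        ext x
        constructor
        · rintro ⟨Q, _, _, rfl⟩; exact hzero Q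
        · rintro rfl; exact ⟨Qu, hQu, hQupos, (hzero Qu).symm⟩
      rw [hset, csSup_singleton]
    have hb1 : (1:ℝ) ≤ Real.exp ((-(s * condRenyiUp P s) + s * Real.log M) / (1 + 2 * s)) := by
      rw [hRen, mul_zero, neg_zero, zero_add]
      rw [show (1:ℝ) = Real.exp 0 from (Real.exp_zero).symm]
      apply Real.exp_le_exp.2
      have : 0 ≤ s * Real.log M := mul_nonneg hs (Real.log_nonneg hM)
      positivity
    -- show Delta ≤ 2 + sqrt ε
    have hu : (1:ℝ) ≤ (Fintype.card A : ℝ) := by exact_mod_cast Fintype.card_pos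
    have hv : (1:ℝ) ≤ (Fintype.card E : ℝ) := by exact_mod_cast Fintype.card_pos
    set u := (Fintype.card A : ℝ) with hudef
    set v := (Fintype.card E : ℝ) with hvdef
    have hu0 : (0:ℝ) < u := lt_of_lt_of_le one_pos hu
    have hv0 : (0:ℝ) < v := lt_of_lt_of_le one_pos hv
    set P0 : A × E → ℝ := fun _ => 1 / (M * u * v) with hP0def
    have hP0sub : IsSubDist P0 := by
      constructor
      · intro p; positivity
      · have : ∑ _p : A × E, (1:ℝ) / (M * u * v) = (u * v) * (1 / (M * u * v)) := by
          simp only [Finset.sum_const, Finset.card_univ, nsmul_eq_mul, Fintype.card_prod]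
          push_cast
          ring
        rw [hP0def, this]
        rw [show (u * v) * (1 / (M * u * v)) = 1 / M by field_simp]
        rw [div_le_one hM0]; exact hM
    have hl1 : l1 P P0 = 1 / M := by
      unfold l1
      have : ∀ p : A × E, |P p - P0 p| = 1 / (M * u * v) := by
        intro p
        rw [hP0 p]
        show |0 - 1 / (M * u * v)| = 1 / (M * u * v)
        rw [zero_sub, abs_neg, abs_of_nonneg (by positivity)]
      calc (∑ a, ∑ e, |P (a, e) - P0 (a, e)|) = ∑ a : A, ∑ e : E, 1 / (M * u * v) := by
            exact Finset.sum_congr rfl fun a _ => Finset.sum_congr rfl fun e _ => this (a, e)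
        _ = 1 / M := by
            simp only [Finset.sum_const, Finset.card_univ, nsmul_eq_mul]
            rw [← hudef, ← hvdef]
            field_simp
    set w := (1 / (M * u * v)) / (Fintype.card E : ℝ)⁻¹ with hwdef
    have hw0 : 0 < w := by positivity
    have hw : w = 1 / (M * u) := by
      rw [hwdef, ← hvdef, div_eq_mul_inv, inv_inv]
      field_simp
      try ring
    have hset0 : {r | ∃ a e, 0 < Qu e ∧ r = P0 (a, e) / Qu e} = {w} := by
      ext r
      constructor
      · rintro ⟨a, e, _, rfl⟩; rfl
      · rintro rfl
        refine ⟨Classical.arbitrary A, Classical.arbitrary E, hQupos (Classical.arbitrary E), ?_⟩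
        rfl
    have hHmin : Real.exp (-Hmin P0 Qu / 2) = Real.sqrt w := by
      have hq : Hmin P0 Qu = -Real.log (sSup {r | ∃ a e, 0 < Qu e ∧ r = P0 (a, e) / Qu e}) := rfl
      rw [hq, hset0, csSup_singleton]
      rw [Real.sqrt_eq_rpow, Real.rpow_def_of_pos hw0]
      congr 1
      ring
    have hsqrtw : Real.sqrt M * Real.sqrt w ≤ 1 := by
      rw [← Real.sqrt_mul hM0.le, hw]
      rw [show M * (1 / (M * u)) = 1 / u by field_simp]
      exact Real.sqrt_le_one.mpr (by rw [div_le_one hu0]; exact hu)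
    have hDelta : Delta_dmin M ε P ≤ 2 * l1 P P0 + Real.sqrt ε * Real.sqrt M * Real.exp (-Hmin P0 Qu / 2) :=
      csInf_le (Ddmin_bdd M ε P) ⟨Qu, P0, hQu, hQupos, hP0sub, rfl⟩
    have hfinal : Delta_dmin M ε P ≤ 2 + Real.sqrt ε := by
      have h1 : 2 * l1 P P0 ≤ 2 := by
        rw [hl1]
        have : 1 / M ≤ 1 := by rw [div_le_one hM0]; exact hM
        linarith
      have h2 : Real.sqrt ε * Real.sqrt M * Real.exp (-Hmin P0 Qu / 2) ≤ Real.sqrt ε := by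
        rw [hHmin, mul_assoc]
        calc Real.sqrt ε * (Real.sqrt M * Real.sqrt w) ≤ Real.sqrt ε * 1 :=
            mul_le_mul_of_nonneg_left hsqrtw (Real.sqrt_nonneg _)
          _ = Real.sqrt ε := mul_one _
      linarith
    calc Delta_dmin M ε P ≤ 2 + Real.sqrt ε := hfinal
      _ = (2 + Real.sqrt ε) * 1 := (mul_one _).symm
      _ ≤ _ := mul_le_mul_of_nonneg_left hb1 h2e.le
  · push_neg at hP0
    obtain ⟨p₀, hp₀ne⟩ := hP0
    have hp₀ : 0 < P p₀ := lt_of_le_of_ne (hP.1 p₀) (Ne.symm hp₀ne)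
    rcases eq_or_lt_of_le hs with heq | hs'
    · -- s = 0
      have hT : 0 < ∑ a, ∑ e, P (a, e) ^ (1 + s) * Qu e ^ (-s) := by
        refine double_sum_pos (f := fun p : A × E => P p ^ (1 + s) * Qu p.2 ^ (-s)) (p₀ := p₀) ?_ ?_
        · intro p
          exact mul_nonneg (Real.rpow_nonneg (hP.1 p) _) (Real.rpow_nonneg (hQupos p.2).le _)
        · show 0 < P p₀ ^ (1 + s) * Qu p₀.2 ^ (-s)
          exact mul_pos (Real.rpow_pos_of_pos hp₀ _) (Real.rpow_pos_of_pos (hQupos p₀.2) _)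
      refine (lemA M ε hM hε P hP hs Qu hQu hQupos hT).trans ?_
      apply mul_le_mul_of_nonneg_left _ h2e.le
      subst heq
      have hsum : (∑ a, ∑ e, P (a, e) ^ ((1:ℝ) + 0) * Qu e ^ (-(0:ℝ))) = ∑ a, ∑ e, P (a, e) := by
        refine Finset.sum_congr rfl fun a _ => Finset.sum_congr rfl fun e _ => ?_
        rw [neg_zero, Real.rpow_zero, mul_one, add_zero, Real.rpow_one]
      rw [hsum]
      have hsle : (∑ a, ∑ e, P (a, e)) ≤ 1 := by
        rw [← Fintype.sum_prod_type]; exact hP.2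
      have hspos : (0:ℝ) < ∑ a, ∑ e, P (a, e) := by
        rw [← Fintype.sum_prod_type]
        exact Finset.sum_pos' (fun p _ => hP.1 p) ⟨p₀, Finset.mem_univ _, hp₀⟩
      rw [Real.rpow_zero, mul_one]
      rw [show 1 / (1 + 2 * (0:ℝ)) = 1 by norm_num, Real.rpow_one]
      rw [show -((0:ℝ) * condRenyiUp P 0) + 0 * Real.log M = 0 by ring, show (1:ℝ) + 2 * 0 = 1 by norm_num,
        zero_div, Real.exp_zero]
      exact hsle
    · -- 0 < s
      set Sq := {x | ∃ Q : E → ℝ, IsDist Q ∧ (∀ e, 0 < Q e) ∧ x = condRenyi P Q s} with hSqdef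
      have hSqne : condRenyi P Qu s ∈ Sq := ⟨Qu, hQu, hQupos, rfl⟩
      set H := condRenyiUp P s with hHdef
      have hHS : sSup Sq = H := rfl
      set g := (-(s * H) + s * Real.log M) / (1 + 2 * s) with hgdef
      suffices hkey : ∀ y, Real.exp g < y → Delta_dmin M ε P ≤ (2 + Real.sqrt ε) * y by
        have hle : Delta_dmin M ε P / (2 + Real.sqrt ε) ≤ Real.exp g :=
          le_of_forall_gt_imp_ge_of_dense fun y hy => (div_le_iff₀ h2e).2 (by rw [mul_comm]; exact hkey y hy)
        calc Delta_dmin M ε P = (2 + Real.sqrt ε) * (Delta_dmin M ε P / (2 + Real.sqrt ε)) := by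
              field_simp
          _ ≤ (2 + Real.sqrt ε) * Real.exp g := mul_le_mul_of_nonneg_left hle h2e.le
      intro y hy
      have hy0 : 0 < y := lt_trans (Real.exp_pos _) hy
      have hy1 : 1 < y / Real.exp g := (one_lt_div (Real.exp_pos _)).2 hy
      set L := Real.log (y / Real.exp g) with hLdef
      have hL : 0 < L := Real.log_pos hy1
      set δ := ((1 + 2 * s) / s) * L with hδdef
      have hδ : 0 < δ := mul_pos (div_pos h12s hs') hL
      obtain ⟨x, hxS, hx⟩ := exists_lt_of_lt_csSup ⟨_, hSqne⟩
        (show H - δ < sSup Sq by rw [hHS]; linarith)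
      obtain ⟨Q, hQd, hQp, rfl⟩ := hxS
      have hTQ : 0 < ∑ a, ∑ e, P (a, e) ^ (1 + s) * Q e ^ (-s) := by
        refine double_sum_pos (f := fun p : A × E => P p ^ (1 + s) * Q p.2 ^ (-s)) (p₀ := p₀) ?_ ?_
        · intro p
          exact mul_nonneg (Real.rpow_nonneg (hP.1 p) _) (Real.rpow_nonneg (hQp p.2).le _)
        · show 0 < P p₀ ^ (1 + s) * Q p₀.2 ^ (-s)
          exact mul_pos (Real.rpow_pos_of_pos hp₀ _) (Real.rpow_pos_of_pos (hQp p₀.2) _)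
      refine (lemA M ε hM hε P hP hs Q hQd hQp hTQ).trans ?_
      apply mul_le_mul_of_nonneg_left _ h2e.le
      set T := ∑ a, ∑ e, P (a, e) ^ (1 + s) * Q e ^ (-s) with hTdef
      have hlogT : Real.log T = -s * condRenyi P Q s := by
        have hcr : condRenyi P Q s = (-1 / s) * Real.log T := rfl
        rw [hcr]
        field_simp
      have hTM : T * M ^ s = Real.exp (-s * condRenyi P Q s + s * Real.log M) := by
        rw [Real.exp_add, ← hlogT, Real.exp_log hTQ]
        congr 1
        rw [Real.rpow_def_of_pos hM0, mul_comm]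
      rw [hTM]
      rw [Real.rpow_def_of_pos (Real.exp_pos _), Real.log_exp]
      have hW : (-s * condRenyi P Q s + s * Real.log M) * (1 / (1 + 2 * s)) ≤
          g + Real.log (y / Real.exp g) := by
        have h1 : -s * condRenyi P Q s + s * Real.log M ≤ (-(s * H) + s * Real.log M) + s * δ := by
          nlinarith [hx, hs']
        have h2 : (-s * condRenyi P Q s + s * Real.log M) * (1 / (1 + 2 * s)) ≤
            ((-(s * H) + s * Real.log M) + s * δ) * (1 / (1 + 2 * s)) := by
          apply mul_le_mul_of_nonneg_right h1
          positivity
        refine h2.trans ?_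
        have h3 : ((-(s * H) + s * Real.log M) + s * δ) * (1 / (1 + 2 * s)) = g + L := by
          rw [hgdef, hδdef]
          field_simp
        rw [h3, hLdef]
      calc Real.exp ((-s * condRenyi P Q s + s * Real.log M) * (1 / (1 + 2 * s)))
          ≤ Real.exp (g + Real.log (y / Real.exp g)) := Real.exp_le_exp.2 hW
        _ = y := by
            rw [Real.exp_add, Real.exp_log (by positivity)]
            field_simp
lemma lemB (M ε : ℝ) (hM : 3 ≤ M) (hε : 0 < ε)
    (P : A × E → ℝ) (hP : IsDist P) {s : ℝ} (hs : 0 ≤ s) :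
    ∃ l x : ℝ, 0 ≤ l ∧ l ≤ x ∧
      x = Real.exp ((-(s * condRenyiDown P s) + s * Real.log M) / (1 + s)) ∧
      Delta_Imin M ε P ≤ eta l (Real.log M) + ε * x := by
  have hM0 : (0:ℝ) < M := by linarith
  have h1s : (0:ℝ) < 1 + s := by linarith
  have hPE0 : ∀ e, 0 ≤ margE P e := fun e => Finset.sum_nonneg fun a _ => hP.1 _
  have hPEle : ∀ a e, P (a, e) ≤ margE P e := fun a e =>
    Finset.single_le_sum (fun a' _ => hP.1 (a', e)) (Finset.mem_univ a)
  have hPEsum : ∑ e, margE P e = 1 := by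
    unfold margE
    rw [Finset.sum_comm, ← Fintype.sum_prod_type]
    exact hP.2
  have hmargNorm : margNorm P = margE P := by
    funext e
    unfold margNorm
    rw [hPEsum, div_one]
  obtain ⟨⟨a₀, e₀⟩, hp₀⟩ : ∃ p₀ : A × E, 0 < P p₀ := by
    by_contra hcon
    push_neg at hcon
    have hz : ∀ p : A × E, P p = 0 := fun p => le_antisymm (hcon p) (hP.1 p)
    have : (1:ℝ) = 0 := by rw [← hP.2]; exact Finset.sum_eq_zero fun p _ => hz p
    norm_num at this
  have hPEp₀ : 0 < margE P e₀ := lt_of_lt_of_le hp₀ (hPEle a₀ e₀)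
  set T := ∑ a, ∑ e, P (a, e) ^ (1 + s) * margE P e ^ (-s) with hTdef
  have hT : 0 < T := by
    refine double_sum_pos (f := fun p : A × E => P p ^ (1 + s) * margE P p.2 ^ (-s))
      (p₀ := (a₀, e₀)) ?_ ?_
    · intro p
      exact mul_nonneg (Real.rpow_nonneg (hP.1 p) _) (Real.rpow_nonneg (hPE0 p.2) _)
    · show 0 < P (a₀, e₀) ^ (1 + s) * margE P e₀ ^ (-s)
      exact mul_pos (Real.rpow_pos_of_pos hp₀ _) (Real.rpow_pos_of_pos hPEp₀ _)
  have hT1 : T ≤ 1 := by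
    have hpt : ∀ a e, P (a, e) ^ (1 + s) * margE P e ^ (-s) ≤ P (a, e) := by
      intro a e
      rcases (hP.1 (a, e)).eq_or_lt with heq | hpos
      · rw [← heq, Real.zero_rpow (by linarith : (1:ℝ) + s ≠ 0), zero_mul]
      · have hPEa : 0 < margE P e := lt_of_lt_of_le hpos (hPEle a e)
        have key : P (a, e) ^ (1 + s) * margE P e ^ (-s) =
            P (a, e) * (P (a, e) / margE P e) ^ s := by
          rw [Real.rpow_add hpos, Real.rpow_one, Real.div_rpow (hP.1 (a, e)) (hPE0 e),
            Real.rpow_neg (hPE0 e)]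
          have h2 : margE P e ^ s ≠ 0 := (Real.rpow_pos_of_pos hPEa s).ne'
          field_simp
          try ring
        rw [key]
        have hle1 : (P (a, e) / margE P e) ^ s ≤ 1 :=
          Real.rpow_le_one (div_nonneg (hP.1 _) (hPE0 e)) ((div_le_one hPEa).2 (hPEle a e)) hs
        nlinarith [hP.1 (a, e)]
    calc T ≤ ∑ a, ∑ e, P (a, e) :=
        Finset.sum_le_sum fun a _ => Finset.sum_le_sum fun e _ => hpt a e
      _ = 1 := by rw [← Fintype.sum_prod_type]; exact hP.2
  set x := Real.exp ((-(s * condRenyiDown P s) + s * Real.log M) / (1 + s)) with hxdef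
  set t := (T * M ^ s) ^ (1 / (1 + s)) with htdef
  have hTM : 0 < T * M ^ s := mul_pos hT (Real.rpow_pos_of_pos hM0 s)
  have ht0 : 0 < t := Real.rpow_pos_of_pos hTM _
  have htx : t = x := by
    rcases eq_or_lt_of_le hs with heq | hs'
    · subst heq
      have hT1' : T = 1 := by
        rw [hTdef]
        have hcg : ∀ a e, P (a, e) ^ ((1:ℝ) + 0) * margE P e ^ (-(0:ℝ)) = P (a, e) := by
          intro a e
          rw [add_zero, Real.rpow_one, neg_zero, Real.rpow_zero, mul_one]
        rw [Finset.sum_congr rfl fun a _ => Finset.sum_congr rfl fun e _ => hcg a e,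
          ← Fintype.sum_prod_type]
        exact hP.2
      rw [htdef, hxdef, hT1']
      norm_num
    · have hcrd : condRenyiDown P s = (-1 / s) * Real.log T := by
        unfold condRenyiDown condRenyi
        rw [hmargNorm]
      have hlogT : Real.log T = -(s * condRenyiDown P s) := by
        rw [hcrd]
        field_simp
      rw [htdef, hxdef, Real.rpow_def_of_pos hTM,
        Real.log_mul hT.ne' (Real.rpow_pos_of_pos hM0 s).ne', Real.log_rpow hM0]
      congr 1
      rw [hlogT]
      field_simp
      try ring
  have ht_pow : t ^ (1 + s) = T * M ^ s := by
    rw [htdef, ← Real.rpow_mul hTM.le, one_div_mul_cancel h1s.ne', Real.rpow_one]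
  set c := t / M with hcdef
  have hc : 0 < c := div_pos ht0 hM0
  set P' : A × E → ℝ := fun p => min (P p) (c * margE P p.2) with hP'def
  have hP'nonneg : ∀ p, 0 ≤ P' p := fun p => le_min (hP.1 p) (mul_nonneg hc.le (hPE0 p.2))
  have hP'le : ∀ p, P' p ≤ P p := fun p => min_le_left _ _
  have hP'sub : IsSubDist P' :=
    ⟨hP'nonneg, le_trans (Finset.sum_le_sum fun p _ => hP'le p) (le_of_eq hP.2)⟩
  have hmarg : ∀ e, margE P' e ≤ margE P e := fun e =>
    Finset.sum_le_sum fun a _ => min_le_left _ _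
  have hl1nn : 0 ≤ l1 P P' :=
    Finset.sum_nonneg fun a _ => Finset.sum_nonneg fun e _ => abs_nonneg _
  have hcT : c ^ (-s) * T = t := by
    rw [hcdef, Real.div_rpow ht0.le hM0.le, Real.rpow_neg hM0.le, div_eq_mul_inv, inv_inv,
      mul_assoc, mul_comm (M ^ s) T, ← ht_pow, ← Real.rpow_add ht0]
    rw [show -s + (1 + s) = 1 by ring, Real.rpow_one]
  have hl1t : l1 P P' ≤ t := by
    have h : l1 P P' ≤ ∑ a, ∑ e, c ^ (-s) * (P (a, e) ^ (1 + s) * margE P e ^ (-s)) := by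
      unfold l1
      refine Finset.sum_le_sum fun a _ => Finset.sum_le_sum fun e _ => ?_
      rw [abs_of_nonneg (sub_nonneg.2 (hP'le (a, e)))]
      refine cut_bound hs hc (hPE0 e) (hP.1 (a, e)) ?_
      intro hlt
      exact lt_of_lt_of_le (lt_of_le_of_lt (mul_nonneg hc.le (hPE0 e)) hlt) (hPEle a e)
    calc l1 P P' ≤ ∑ a, ∑ e, c ^ (-s) * (P (a, e) ^ (1 + s) * margE P e ^ (-s)) := h
      _ = c ^ (-s) * T := by
          rw [hTdef, Finset.mul_sum]
          exact Finset.sum_congr rfl fun a _ => by rw [Finset.mul_sum]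
      _ = t := hcT
  set Sm := {r | ∃ a e, 0 < margE P e ∧ r = P' (a, e) / margE P e} with hSmdef
  have hmemS : P' (a₀, e₀) / margE P e₀ ∈ Sm := ⟨a₀, e₀, hPEp₀, rfl⟩
  have hSub : ∀ r ∈ Sm, r ≤ c := by
    rintro r ⟨a, e, hpe, rfl⟩
    rw [div_le_iff₀ hpe]
    exact min_le_right _ _
  have hbdd : BddAbove Sm := ⟨c, hSub⟩
  have hm_pos : 0 < sSup Sm := by
    refine lt_of_lt_of_le ?_ (le_csSup hbdd hmemS)
    have h1 : 0 < P' (a₀, e₀) := lt_min hp₀ (mul_pos hc hPEp₀)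
    exact div_pos h1 hPEp₀
  have hm_le : sSup Sm ≤ c := csSup_le ⟨_, hmemS⟩ hSub
  have hexp : Real.exp (-Hmin P' (margE P)) ≤ c := by
    have hq : Hmin P' (margE P) = -Real.log (sSup Sm) := rfl
    rw [hq, neg_neg, Real.exp_log hm_pos]
    exact hm_le
  have hbddB : BddBelow {x | ∃ P'' : A × E → ℝ, IsSubDist P'' ∧ (∀ e, margE P'' e ≤ margE P e) ∧
      x = eta (l1 P P'') (Real.log M) + ε * M * Real.exp (-Hmin P'' (margE P))} := by
    refine ⟨0, ?_⟩
    rintro x ⟨P'', hsub'', hm'', rfl⟩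
    have hnn : 0 ≤ l1 P P'' :=
      Finset.sum_nonneg fun a _ => Finset.sum_nonneg fun e _ => abs_nonneg _
    have hl2 : l1 P P'' ≤ 2 := by
      have hpt : ∀ p : A × E, |P p - P'' p| ≤ P p + P'' p := by
        intro p
        have := abs_sub (P p) (P'' p)
        rw [abs_of_nonneg (hP.1 p), abs_of_nonneg (hsub''.1 p)] at this
        exact this
      have : l1 P P'' ≤ ∑ a, ∑ e, (P (a, e) + P'' (a, e)) :=
        Finset.sum_le_sum fun a _ => Finset.sum_le_sum fun e _ => hpt (a, e)
      have h2 : ∑ a, ∑ e, (P (a, e) + P'' (a, e)) ≤ 2 := by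
        have hsplit : ∑ a, ∑ e, (P (a, e) + P'' (a, e)) =
            (∑ a, ∑ e, P (a, e)) + ∑ a, ∑ e, P'' (a, e) := by
          rw [← Finset.sum_add_distrib]
          exact Finset.sum_congr rfl fun a _ => by rw [Finset.sum_add_distrib]
        have e1 : (∑ a, ∑ e, P (a, e)) = 1 := by rw [← Fintype.sum_prod_type]; exact hP.2
        have e2 : (∑ a, ∑ e, P'' (a, e)) ≤ 1 := by rw [← Fintype.sum_prod_type]; exact hsub''.2
        rw [hsplit, e1]
        linarith
      linarith
    have heta : 0 ≤ eta (l1 P P'') (Real.log M) := by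
      rcases hnn.eq_or_lt with heq | hpos
      · rw [← heq]; unfold eta; simp
      · have hlog : Real.log (l1 P P'') ≤ Real.log M :=
          Real.log_le_log hpos (by linarith)
        unfold eta
        nlinarith [mul_le_mul_of_nonneg_left hlog hpos.le]
    have h2 : (0:ℝ) ≤ ε * M * Real.exp (-Hmin P'' (margE P)) := by positivity
    linarith
  have hDelta : Delta_Imin M ε P ≤
      eta (l1 P P') (Real.log M) + ε * M * Real.exp (-Hmin P' (margE P)) :=
    csInf_le hbddB ⟨P', hP'sub, hmarg, rfl⟩
  have hMc : M * c = t := by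
    rw [hcdef]
    field_simp
  refine ⟨l1 P P', x, hl1nn, htx ▸ hl1t, rfl, ?_⟩
  have hstep : ε * M * Real.exp (-Hmin P' (margE P)) ≤ ε * x := by
    calc ε * M * Real.exp (-Hmin P' (margE P)) ≤ ε * M * c := by
          apply mul_le_mul_of_nonneg_left hexp (by positivity)
      _ = ε * (M * c) := by ring
      _ = ε * t := by rw [hMc]
      _ = ε * x := by rw [htx]
  linarith
lemma part2 [Nonempty A] [Nonempty E] (M ε : ℝ) (hM : 3 ≤ M) (hε : 0 < ε)
    (P : A × E → ℝ) (hP : IsDist P) :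
    Delta_Imin M ε P ≤
      eta (sInf {x | ∃ s : ℝ, 0 ≤ s ∧
          x = Real.exp ((-(s * condRenyiDown P s) + s * Real.log M) / (1 + s))})
        (ε + Real.log M) := by
  have hM0 : (0:ℝ) < M := by linarith
  set S := {x | ∃ s : ℝ, 0 ≤ s ∧
      x = Real.exp ((-(s * condRenyiDown P s) + s * Real.log M) / (1 + s))} with hSdef
  have hS1 : (1:ℝ) ∈ S := ⟨0, le_refl 0, by norm_num⟩
  have hbdd : BddBelow S := ⟨0, by rintro x ⟨s, hs, rfl⟩; exact (Real.exp_pos _).le⟩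
  set z := sInf S with hzdef
  have hz0 : 0 ≤ z := Real.sInf_nonneg (by rintro x ⟨s, hs, rfl⟩; exact (Real.exp_pos _).le)
  have hz1 : z ≤ 1 := csInf_le hbdd hS1
  have hlogM : 1 < Real.log M := by
    have he3 : Real.exp 1 < 3 := lt_of_lt_of_le Real.exp_one_lt_d9 (by norm_num)
    calc (1:ℝ) = Real.log (Real.exp 1) := (Real.log_exp 1).symm
      _ < Real.log M := Real.log_lt_log (Real.exp_pos 1) (lt_of_lt_of_le he3 hM)
  set δ₀ := Real.exp (Real.log M - 1) - 1 with hδ₀def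
  have hδ₀ : 0 < δ₀ := by
    have : Real.exp 0 < Real.exp (Real.log M - 1) := Real.exp_lt_exp.2 (by linarith)
    rw [Real.exp_zero] at this
    rw [hδ₀def]
    linarith
  have key : ∀ δ ∈ Set.Ioc (0:ℝ) δ₀, Delta_Imin M ε P ≤ eta (z + δ) (ε + Real.log M) := by
    rintro δ ⟨hδpos, hδle⟩
    obtain ⟨x, hxS, hxlt⟩ := exists_lt_of_csInf_lt ⟨1, hS1⟩
      (show sInf S < z + δ from lt_add_of_pos_right _ hδpos)
    obtain ⟨s, hs, rfl⟩ := hxS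
    obtain ⟨l, x', hl0, hlx, hx'eq, hD⟩ := lemB M ε hM hε P hP hs
    rw [hx'eq] at hlx hD
    have hzexp : z + δ ≤ Real.exp (Real.log M - 1) := by
      rw [hδ₀def] at hδle
      linarith
    have h1 : eta l (Real.log M) ≤ eta (z + δ) (Real.log M) :=
      eta_mono_s13 hl0 (hlx.trans hxlt.le) hzexp
    have h2 : ε * Real.exp ((-(s * condRenyiDown P s) + s * Real.log M) / (1 + s)) ≤
        ε * (z + δ) := mul_le_mul_of_nonneg_left hxlt.le hε.le
    have h3 : eta (z + δ) (Real.log M) + ε * (z + δ) = eta (z + δ) (ε + Real.log M) := by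
      unfold eta
      ring
    linarith
  have hcont : Continuous (fun w : ℝ => eta w (ε + Real.log M)) := by
    have hrw : (fun w : ℝ => eta w (ε + Real.log M)) =
        fun w : ℝ => -(w * Real.log w) + w * (ε + Real.log M) := by
      funext w
      unfold eta
      ring
    rw [hrw]
    exact (Real.continuous_mul_log.neg).add (continuous_id.mul continuous_const)
  have htend : Filter.Tendsto (fun δ : ℝ => eta (z + δ) (ε + Real.log M))
      (nhdsWithin 0 (Set.Ioi 0)) (nhds (eta z (ε + Real.log M))) := by
    have h1 : Filter.Tendsto (fun δ : ℝ => z + δ) (nhds 0) (nhds z) := by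
      have h2 : Continuous (fun δ : ℝ => z + δ) := continuous_const.add continuous_id
      have h3 := h2.tendsto (0:ℝ)
      simpa using h3
    exact (hcont.tendsto z).comp (h1.mono_left nhdsWithin_le_nhds)
  refine ge_of_tendsto htend ?_
  filter_upwards [Ioc_mem_nhdsGT_of_mem (Set.mem_Ico.mpr ⟨le_refl (0:ℝ), hδ₀⟩)] with δ hδ
  exact key δ hδ

/-- Theorem `L3-19-10` of the paper: explicit single-shot upper bounds on the
smoothing-of-min-entropy quantities `Δ_{d,min}` and `Δ_{I,min}` in terms of the
conditional Rényi entropies `H^↑_{1+s}` and `H^↓_{1+s}` (the `s = 0` terms of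
the infima being `1`). -/
theorem statement13 {A E : Type*} [Fintype A] [Fintype E] [Nonempty A] [Nonempty E]
    (M ε : ℝ) (hM : 1 ≤ M) (hε : 0 < ε)
    (P : A × E → ℝ) (hP : IsSubDist P) :
    (Delta_dmin M ε P ≤
      (2 + Real.sqrt ε) *
        sInf {x | ∃ s : ℝ, 0 ≤ s ∧
          x = Real.exp ((-(s * condRenyiUp P s) + s * Real.log M) / (1 + 2 * s))}) ∧
    (IsDist P → 3 ≤ M →
      Delta_Imin M ε P ≤
        eta (sInf {x | ∃ s : ℝ, 0 ≤ s ∧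
            x = Real.exp ((-(s * condRenyiDown P s) + s * Real.log M) / (1 + s))})
          (ε + Real.log M)) := by
  constructor
  · exact part1 M ε hM hε P hP
  · intro hPd hM3
    exact part2 M ε hM3 hε P hPd
end Hayashi
end

section
/- Let P_{A,E} be a normalized joint distribution on 𝒜 × ℰ with P_E(e) > 0 for every e ∈ ℰ, and let R ∈ ℝ. Then (1/2)·e_I(P_{A,E}|R) ≤ e_d(P_{A,E}|R) and e_d(P_{A,E}|R) ≤ e_I(P_{A,E}|R). -/
open Real Finset Filter

attribute [local instance] Classical.propDecidable

namespace Hayashi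

variable {A E : Type*} [Fintype A] [Fintype E]

lemma sum_pair (f : A × E → ℝ) : ∑ a, ∑ e, f (a, e) = ∑ x : A × E, f x :=
  (Fintype.sum_prod_type f).symm

omit [Fintype E] in
lemma margE_nonneg (P : A × E → ℝ) (hP : ∀ x, 0 ≤ P x) (e : E) : 0 ≤ margE P e :=
  Finset.sum_nonneg fun a _ => hP (a, e)

lemma margE_isDist (P : A × E → ℝ) (hP : IsDist P) : IsDist (margE P) := by
  refine ⟨margE_nonneg P hP.1, ?_⟩
  rw [show (∑ e, margE P e) = ∑ e, ∑ a, P (a, e) from rfl, ← Fintype.sum_prod_type_right, hP.2]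

lemma margE_le_one (P : A × E → ℝ) (hP : IsDist P) (e : E) : margE P e ≤ 1 := by
  have h := margE_isDist P hP
  rw [← h.2]
  exact Finset.single_le_sum (fun e _ => h.1 e) (Finset.mem_univ e)

lemma P_le_one (P : A × E → ℝ) (hP : IsDist P) (x : A × E) : P x ≤ 1 := by
  rw [← hP.2]
  exact Finset.single_le_sum (fun y _ => hP.1 y) (Finset.mem_univ x)

lemma exists_pos (P : A × E → ℝ) (hP : IsDist P) : ∃ x : A × E, 0 < P x := by
  by_contra h
  push_neg at h
  have : ∑ x, P x = 0 := Finset.sum_eq_zero fun x _ => le_antisymm (h x) (hP.1 x)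
  rw [hP.2] at this; norm_num at this

lemma one_le_rpow_neg {q s : ℝ} (hq : 0 < q) (hq1 : q ≤ 1) (hs : 0 ≤ s) : 1 ≤ q ^ (-s) := by
  rw [Real.rpow_neg hq.le]
  exact (one_le_inv₀ (rpow_pos_of_pos hq s)).2 (Real.rpow_le_one hq.le hq1 hs)

/-- positivity of the Rényi sum -/
lemma T_pos (P : A × E → ℝ) (hP : IsDist P) {Q : E → ℝ} (hQ : ∀ e, 0 < Q e) (s : ℝ) :
    0 < ∑ a, ∑ e, P (a, e) ^ (1 + s) * Q e ^ (-s) := by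
  rw [sum_pair (fun x => P x ^ (1 + s) * Q x.2 ^ (-s))]
  obtain ⟨x, hx⟩ := exists_pos P hP
  exact Finset.sum_pos'
    (fun y _ => mul_nonneg (rpow_nonneg (hP.1 y) _) (rpow_nonneg (hQ y.2).le _))
    ⟨x, Finset.mem_univ x, mul_pos (rpow_pos_of_pos hx _) (rpow_pos_of_pos (hQ x.2) _)⟩

/-- lower bound on the Rényi sum by a single positive entry -/
lemma T_ge (P : A × E → ℝ) (hP : IsDist P) {x0 : A × E} (hx0 : 0 < P x0)
    {Q : E → ℝ} (hQ : ∀ e, 0 < Q e) (hQ1 : ∀ e, Q e ≤ 1) {s : ℝ} (hs : 0 ≤ s) :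
    P x0 ^ (1 + s) ≤ ∑ a, ∑ e, P (a, e) ^ (1 + s) * Q e ^ (-s) := by
  rw [sum_pair (fun x => P x ^ (1 + s) * Q x.2 ^ (-s))]
  calc P x0 ^ (1 + s) = P x0 ^ (1 + s) * 1 := (mul_one _).symm
    _ ≤ P x0 ^ (1 + s) * Q x0.2 ^ (-s) :=
        mul_le_mul_of_nonneg_left (one_le_rpow_neg (hQ x0.2) (hQ1 x0.2) hs) (rpow_nonneg hx0.le _)
    _ ≤ _ := Finset.single_le_sum
        (fun y _ => mul_nonneg (rpow_nonneg (hP.1 y) _) (rpow_nonneg (hQ y.2).le _))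
        (Finset.mem_univ x0)

/-- `s·H_{1+s}(P‖Q) ≤ 2·(-log P x0)` for `s ∈ (0,1]`. -/
lemma sMul_condRenyi_le (P : A × E → ℝ) (hP : IsDist P) {x0 : A × E} (hx0 : 0 < P x0)
    {Q : E → ℝ} (hQ : ∀ e, 0 < Q e) (hQ1 : ∀ e, Q e ≤ 1)
    {s : ℝ} (hs : 0 < s) (hs1 : s ≤ 1) :
    s * condRenyi P Q s ≤ 2 * (-Real.log (P x0)) := by
  have hT := T_pos P hP hQ s
  have hT1 := T_ge P hP hx0 hQ hQ1 hs.le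
  have hlogp : Real.log (P x0) ≤ 0 := Real.log_nonpos hx0.le (P_le_one P hP x0)
  have h1 : s * condRenyi P Q s
      = -Real.log (∑ a, ∑ e, P (a, e) ^ (1 + s) * Q e ^ (-s)) := by
    rw [condRenyi]; field_simp
  rw [h1]
  have h2 : Real.log (P x0 ^ (1 + s)) ≤ Real.log (∑ a, ∑ e, P (a, e) ^ (1 + s) * Q e ^ (-s)) :=
    Real.log_le_log (rpow_pos_of_pos hx0 _) hT1
  rw [Real.log_rpow hx0] at h2
  nlinarith

/-- The key Hölder inequality: for full-support `Q` and `t ∈ (0,1/2]`,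
`H_{1/(1-t)}(P‖Q) ≤ H↓_{1+t}(P)`. -/
lemma key (P : A × E → ℝ) (hP : IsDist P) (hPE : ∀ e, 0 < margE P e)
    {Q : E → ℝ} (hQd : IsDist Q) (hQ : ∀ e, 0 < Q e) {t : ℝ} (ht : 0 < t) (ht2 : t ≤ 1 / 2) :
    condRenyi P Q (t / (1 - t)) ≤ condRenyi P (margE P) t := by
  have h1t : 0 < 1 - t := by linarith
  set s := t / (1 - t) with hsdef
  have hs : 0 < s := div_pos ht h1t
  set T := ∑ a, ∑ e, P (a, e) ^ (1 + s) * Q e ^ (-s) with hTdef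
  set D := ∑ a, ∑ e, P (a, e) ^ (1 + t) * margE P e ^ (-t) with hDdef
  have hTpos : 0 < T := T_pos P hP hQ s
  have hDpos : 0 < D := T_pos P hP hPE t
  -- Hölder step
  have holder : D ≤ T ^ (1 - t) := by
    have hpq : Real.HolderConjugate (1 / (1 - t)) (1 / t) :=
      Real.holderConjugate_one_div h1t ht (by ring)
    have hH := Real.inner_le_Lp_mul_Lq_of_nonneg (Finset.univ : Finset (A × E))
      hpq
      (f := fun x => P x * Q x.2 ^ (-t)) (g := fun x => P x ^ t * margE P x.2 ^ (-t) * Q x.2 ^ t)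
      (fun x _ => mul_nonneg (hP.1 x) (rpow_nonneg (hQ x.2).le _))
      (fun x _ => mul_nonneg (mul_nonneg (rpow_nonneg (hP.1 x) _) (rpow_nonneg (hPE x.2).le _))
        (rpow_nonneg (hQ x.2).le _))
    -- identify the three sums
    have hfg : ∀ x : A × E, (P x * Q x.2 ^ (-t)) * (P x ^ t * margE P x.2 ^ (-t) * Q x.2 ^ t)
        = P x ^ (1 + t) * margE P x.2 ^ (-t) := by
      intro x
      have hQQ : Q x.2 ^ (-t) * Q x.2 ^ t = 1 := by
        rw [← Real.rpow_add (hQ x.2)]; simp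
      have hPP : P x * P x ^ t = P x ^ (1 + t) := by
        rcases eq_or_lt_of_le (hP.1 x) with h | h
        · rw [← h, Real.zero_rpow (by positivity : (1 : ℝ) + t ≠ 0), zero_mul]
        · rw [Real.rpow_add h, Real.rpow_one]
      calc (P x * Q x.2 ^ (-t)) * (P x ^ t * margE P x.2 ^ (-t) * Q x.2 ^ t)
          = (P x * P x ^ t) * margE P x.2 ^ (-t) * (Q x.2 ^ (-t) * Q x.2 ^ t) := by ring
        _ = P x ^ (1 + t) * margE P x.2 ^ (-t) := by rw [hQQ, hPP, mul_one]
    have hfp : ∀ x : A × E, (P x * Q x.2 ^ (-t)) ^ (1 / (1 - t))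
        = P x ^ (1 + s) * Q x.2 ^ (-s) := by
      intro x
      rw [Real.mul_rpow (hP.1 x) (rpow_nonneg (hQ x.2).le _),
        ← Real.rpow_mul (hQ x.2).le,
        show (1 : ℝ) / (1 - t) = 1 + s by rw [hsdef]; field_simp; ring,
        show -t * ((1 : ℝ) + s) = -s by rw [hsdef]; field_simp; ring]
    have hgq : ∀ x : A × E, (P x ^ t * margE P x.2 ^ (-t) * Q x.2 ^ t) ^ (1 / t)
        = P x * (margE P x.2)⁻¹ * Q x.2 := by
      intro x
      rw [Real.mul_rpow (mul_nonneg (rpow_nonneg (hP.1 x) _) (rpow_nonneg (hPE x.2).le _))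
          (rpow_nonneg (hQ x.2).le _),
        Real.mul_rpow (rpow_nonneg (hP.1 x) _) (rpow_nonneg (hPE x.2).le _),
        ← Real.rpow_mul (hP.1 x), ← Real.rpow_mul (hPE x.2).le, ← Real.rpow_mul (hQ x.2).le,
        mul_one_div_cancel ht.ne', Real.rpow_one, Real.rpow_one,
        show -t * ((1 : ℝ) / t) = -1 by field_simp,
        Real.rpow_neg_one]
    have hsum_g : ∑ x : A × E, P x * (margE P x.2)⁻¹ * Q x.2 = 1 := by
      rw [← sum_pair (fun x => P x * (margE P x.2)⁻¹ * Q x.2), Finset.sum_comm]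
      have : ∀ e : E, (∑ a : A, P (a, e) * (margE P e)⁻¹ * Q e) = Q e := by
        intro e
        rw [← Finset.sum_mul, ← Finset.sum_mul]
        rw [show (∑ a : A, P (a, e)) = margE P e from rfl,
          mul_inv_cancel₀ (hPE e).ne', one_mul]
      rw [Finset.sum_congr rfl fun e _ => this e, hQd.2]
    calc D = ∑ x : A × E, (P x * Q x.2 ^ (-t)) * (P x ^ t * margE P x.2 ^ (-t) * Q x.2 ^ t) := by
          rw [hDdef, sum_pair (fun x => P x ^ (1 + t) * margE P x.2 ^ (-t))]
          exact (Finset.sum_congr rfl fun x _ => hfg x).symm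
      _ ≤ (∑ x : A × E, (P x * Q x.2 ^ (-t)) ^ (1 / (1 - t))) ^ (1 / (1 / (1 - t))) *
          (∑ x : A × E, (P x ^ t * margE P x.2 ^ (-t) * Q x.2 ^ t) ^ (1 / t)) ^ (1 / (1 / t)) := hH
      _ = T ^ (1 - t) := by
          rw [Finset.sum_congr rfl fun x _ => hfp x, Finset.sum_congr rfl fun x _ => hgq x,
            hsum_g, Real.one_rpow, mul_one, one_div_one_div, hTdef,
            sum_pair (fun x => P x ^ (1 + s) * Q x.2 ^ (-s))]
  -- conclude
  have hlog : Real.log D ≤ (1 - t) * Real.log T := by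
    have := Real.log_le_log hDpos holder
    rwa [Real.log_rpow hTpos] at this
  have heq : condRenyi P Q s = (-1 / t) * ((1 - t) * Real.log T) := by
    rw [condRenyi, ← hTdef, hsdef]
    field_simp
  rw [heq, condRenyi, ← hDdef]
  have hneg : -1 / t ≤ 0 := by
    apply div_nonpos_of_nonpos_of_nonneg <;> linarith
  exact mul_le_mul_of_nonpos_left hlog hneg



lemma elem_bound (P : A × E → ℝ) (hP : IsDist P) (hPE : ∀ e, 0 < margE P e)
    {x0 : A × E} (hx0 : 0 < P x0) (R : ℝ) {s : ℝ} (hs : 0 < s) (hs1 : s ≤ 1) :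
    s * (condRenyi P (margE P) s - R) ≤ 2 * (-Real.log (P x0)) + |R| := by
  have h1 := sMul_condRenyi_le P hP hx0 hPE (margE_le_one P hP) hs hs1
  have h2 : -(s * R) ≤ |R| := by
    calc -(s * R) ≤ |s * R| := neg_le_abs _
      _ = s * |R| := by rw [abs_mul, abs_of_pos hs]
      _ ≤ 1 * |R| := mul_le_mul_of_nonneg_right hs1 (abs_nonneg R)
      _ = |R| := one_mul _
  rw [mul_sub]; linarith

lemma condRenyiUp_le (P : A × E → ℝ) (hP : IsDist P) (hPE : ∀ e, 0 < margE P e)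
    {t : ℝ} (ht : 0 < t) (ht2 : t ≤ 1 / 2) :
    condRenyiUp P (t / (1 - t)) ≤ condRenyi P (margE P) t := by
  apply csSup_le
  · exact ⟨condRenyi P (margE P) (t / (1 - t)), margE P, margE_isDist P hP, hPE, rfl⟩
  · rintro x ⟨Q, hQd, hQpos, rfl⟩
    exact key P hP hPE hQd hQpos ht ht2

lemma subst_facts {s : ℝ} (hs : 0 < s) (hs1 : s ≤ 1) :
    0 < s / (1 + s) ∧ s / (1 + s) ≤ 1 / 2 ∧ s / (1 + s) / (1 - s / (1 + s)) = s := by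
  have h1s : (0 : ℝ) < 1 + s := by linarith
  have ht : 0 < s / (1 + s) := div_pos hs h1s
  have ht2 : s / (1 + s) ≤ 1 / 2 := by
    rw [div_le_div_iff₀ h1s (by norm_num : (0:ℝ) < 2)]; linarith
  have h1 : 1 - s / (1 + s) = 1 / (1 + s) := by field_simp; ring
  have hts : s / (1 + s) / (1 - s / (1 + s)) = s := by
    rw [h1]; field_simp
  exact ⟨ht, ht2, hts⟩

lemma down_le_condRenyiUp (P : A × E → ℝ) (hP : IsDist P) (hPE : ∀ e, 0 < margE P e)
    {s : ℝ} (hs : 0 < s) (hs1 : s ≤ 1) :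
    condRenyi P (margE P) s ≤ condRenyiUp P s := by
  obtain ⟨ht, ht2, hts⟩ := subst_facts hs hs1
  apply le_csSup
  · refine ⟨condRenyi P (margE P) (s / (1 + s)), ?_⟩
    rintro x ⟨Q, hQd, hQpos, rfl⟩
    have h := key P hP hPE hQd hQpos ht ht2
    rwa [hts] at h
  · exact ⟨margE P, margE_isDist P hP, hPE, rfl⟩


/-- The exponent `e_d(P|R) = max_{t ∈ [0,1/2]} t(H^↑_{1/(1-t)}(A|E|P) - R)`,
where `H^↑_1 := H(A|E|P)`. -/
noncomputable def e_d {A E : Type*} [Fintype A] [Fintype E]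
    (P : A × E → ℝ) (R : ℝ) : ℝ :=
  sSup {x | ∃ t ∈ Set.Icc (0 : ℝ) (1 / 2),
    x = t * ((if t = 0 then condEnt P else condRenyiUp P (t / (1 - t))) - R)}

/-- The exponent `e_I(P|R) = max_{s ∈ [0,1]} s(H^↓_{1+s}(A|E|P) - R)`, where
`H^↓_{1+s}` is relative to the (full-support) marginal `P_E` and `H^↓_1 := H(A|E|P)`. -/
noncomputable def e_I {A E : Type*} [Fintype A] [Fintype E]
    (P : A × E → ℝ) (R : ℝ) : ℝ :=
  sSup {x | ∃ s ∈ Set.Icc (0 : ℝ) 1,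
    x = s * ((if s = 0 then condEnt P else condRenyi P (margE P) s) - R)}

/-- Lemma `L3-29-1` of the paper: `e_I(P|R)/2 ≤ e_d(P|R) ≤ e_I(P|R)`. -/
theorem statement15 {A E : Type*} [Fintype A] [Fintype E] [Nonempty A] [Nonempty E]
    (P : A × E → ℝ) (hP : IsDist P) (hPE : ∀ e, 0 < margE P e) (R : ℝ) :
    (1 / 2) * e_I P R ≤ e_d P R ∧ e_d P R ≤ e_I P R := by
  obtain ⟨x0, hx0⟩ := exists_pos P hP
  have hlogp : 0 ≤ -Real.log (P x0) := by
    have := Real.log_nonpos hx0.le (P_le_one P hP x0); linarith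
  have hC0 : (0 : ℝ) ≤ 2 * (-Real.log (P x0)) + |R| :=
    add_nonneg (by linarith) (abs_nonneg R)
  simp only [e_I, e_d]
  have hSIbdd : BddAbove {x | ∃ s ∈ Set.Icc (0 : ℝ) 1,
      x = s * ((if s = 0 then condEnt P else condRenyi P (margE P) s) - R)} := by
    refine ⟨2 * (-Real.log (P x0)) + |R|, ?_⟩
    rintro x ⟨s, hs, rfl⟩
    rcases eq_or_lt_of_le hs.1 with h | h
    · rw [← h, zero_mul]; exact hC0
    · rw [if_neg h.ne']
      exact elem_bound P hP hPE hx0 R h hs.2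
  have hSdbdd : BddAbove {x | ∃ t ∈ Set.Icc (0 : ℝ) (1 / 2),
      x = t * ((if t = 0 then condEnt P else condRenyiUp P (t / (1 - t))) - R)} := by
    refine ⟨2 * (-Real.log (P x0)) + |R|, ?_⟩
    rintro x ⟨t, ht, rfl⟩
    rcases eq_or_lt_of_le ht.1 with h | h
    · rw [← h, zero_mul]; exact hC0
    · rw [if_neg h.ne']
      calc t * (condRenyiUp P (t / (1 - t)) - R)
          ≤ t * (condRenyi P (margE P) t - R) := by
            have := condRenyiUp_le P hP hPE h ht.2
            apply mul_le_mul_of_nonneg_left (by linarith) h.le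
        _ ≤ _ := elem_bound P hP hPE hx0 R h (by linarith [ht.2])
  have h0I : (0 : ℝ) ∈ {x | ∃ s ∈ Set.Icc (0 : ℝ) 1,
      x = s * ((if s = 0 then condEnt P else condRenyi P (margE P) s) - R)} :=
    ⟨0, ⟨le_refl 0, by norm_num⟩, (zero_mul _).symm⟩
  have h0d : (0 : ℝ) ∈ {x | ∃ t ∈ Set.Icc (0 : ℝ) (1 / 2),
      x = t * ((if t = 0 then condEnt P else condRenyiUp P (t / (1 - t))) - R)} :=
    ⟨0, ⟨le_refl 0, by norm_num⟩, (zero_mul _).symm⟩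
  have hednn : (0 : ℝ) ≤ sSup {x | ∃ t ∈ Set.Icc (0 : ℝ) (1 / 2),
      x = t * ((if t = 0 then condEnt P else condRenyiUp P (t / (1 - t))) - R)} :=
    le_csSup hSdbdd h0d
  constructor
  · have hkey : sSup {x | ∃ s ∈ Set.Icc (0 : ℝ) 1,
        x = s * ((if s = 0 then condEnt P else condRenyi P (margE P) s) - R)}
        ≤ 2 * sSup {x | ∃ t ∈ Set.Icc (0 : ℝ) (1 / 2),
        x = t * ((if t = 0 then condEnt P else condRenyiUp P (t / (1 - t))) - R)} := by
      apply csSup_le ⟨0, h0I⟩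
      rintro x ⟨s, hs, rfl⟩
      rcases eq_or_lt_of_le hs.1 with h | h
      · rw [← h, zero_mul]; linarith
      · rw [if_neg h.ne']
        obtain ⟨ht, ht2, hts⟩ := subst_facts h hs.2
        have h1s : (0 : ℝ) < 1 + s := by linarith
        have hmem : (s / (1 + s)) * (condRenyiUp P s - R) ∈
            {x | ∃ t ∈ Set.Icc (0 : ℝ) (1 / 2),
            x = t * ((if t = 0 then condEnt P else condRenyiUp P (t / (1 - t))) - R)} :=
          ⟨s / (1 + s), ⟨ht.le, ht2⟩, by rw [if_neg ht.ne', hts]⟩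
        have hle := le_csSup hSdbdd hmem
        have hud : condRenyi P (margE P) s ≤ condRenyiUp P s :=
          down_le_condRenyiUp P hP hPE h hs.2
        rcases le_or_gt (condRenyi P (margE P) s - R) 0 with hc | hc
        · have hnp : s * (condRenyi P (margE P) s - R) ≤ 0 :=
            mul_nonpos_of_nonneg_of_nonpos h.le hc
          linarith
        · have h2t : s ≤ 2 * (s / (1 + s)) := by
            rw [← mul_div_assoc, le_div_iff₀ h1s]; nlinarith [mul_nonneg h.le (sub_nonneg.2 hs.2)]
          calc s * (condRenyi P (margE P) s - R)
              ≤ (2 * (s / (1 + s))) * (condRenyi P (margE P) s - R) :=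
                mul_le_mul_of_nonneg_right h2t hc.le
            _ ≤ (2 * (s / (1 + s))) * (condRenyiUp P s - R) := by
                apply mul_le_mul_of_nonneg_left (by linarith) (by linarith)
            _ = 2 * ((s / (1 + s)) * (condRenyiUp P s - R)) := by ring
            _ ≤ _ := by linarith
    linarith
  · apply csSup_le ⟨0, h0d⟩
    rintro x ⟨t, ht, rfl⟩
    rcases eq_or_lt_of_le ht.1 with h | h
    · rw [← h, zero_mul]; exact le_csSup hSIbdd h0I
    · rw [if_neg h.ne']
      have hstep : t * (condRenyiUp P (t / (1 - t)) - R)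
          ≤ t * (condRenyi P (margE P) t - R) := by
        have := condRenyiUp_le P hP hPE h ht.2
        apply mul_le_mul_of_nonneg_left (by linarith) h.le
      exact hstep.trans (le_csSup hSIbdd
        ⟨t, ⟨h.le, by linarith [ht.2]⟩, by rw [if_neg h.ne']⟩)
end Hayashi
end
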